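/- arXiv:2106.01742 — 12 statements merged into one kernel-verified Lean document; each statement's English description precedes it below -/
import Mathlib

section
/- Let p < q be primes and write (Φ_{pq}(x) - 1)/(x - 1) = Σ_i b_i x^i (this quotient is a polynomial since Φ_{pq}(1) = 1). Then for every i ≥ 0, b_i = 0 if the equation αp + βq = i has a solution in non-negative integers (α, β), and b_i = 1 otherwise. -/
open scoped Classical

open Polynomial

namespace CycAux

open Finset

variable {p q : ℕ}

/-- Reduce the first coefficient mod `q`, keeping the second one at least as large. -/
lemma reduce (hq0 : 0 < q) {α β n : ℕ} (h : α * p + β * q = n) :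
    ∃ a b : ℕ, a < q ∧ β ≤ b ∧ a * p + b * q = n := by
  refine ⟨α % q, β + α / q * p, Nat.mod_lt _ hq0, Nat.le_add_right _ _, ?_⟩
  have hα : q * (α / q) + α % q = α := Nat.div_add_mod α q
  calc α % q * p + (β + α / q * p) * q
      = (q * (α / q) + α % q) * p + β * q := by ring
    _ = n := by rw [hα, h]

lemma unique_lt (hc : Nat.Coprime p q) {a a' b b' : ℕ} (ha : a < q) (ha' : a' < q)
    (h : a * p + b * q = a' * p + b' * q) : a = a' ∧ b = b' := by
  have hq0 : 0 < q := lt_of_le_of_lt (Nat.zero_le a) ha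
  have hcast : (a : ℤ) * p + b * q = a' * p + b' * q := by exact_mod_cast h
  have hco : IsCoprime (q : ℤ) (p : ℤ) := by
    rw [Int.isCoprime_iff_gcd_eq_one]
    simpa [Int.gcd_natCast_natCast, Nat.gcd_comm] using hc
  have hz : ((a' : ℤ) - a) * p = ((b : ℤ) - b') * q := by linear_combination -hcast
  have hdvd : (q : ℤ) ∣ ((a' : ℤ) - a) := hco.dvd_of_dvd_mul_right ⟨(b:ℤ) - b', by linear_combination hz⟩
  have haq : (a : ℤ) < q := by exact_mod_cast ha
  have haq' : (a' : ℤ) < q := by exact_mod_cast ha'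
  have ha0 : (0 : ℤ) ≤ a := Int.natCast_nonneg a
  have ha0' : (0 : ℤ) ≤ a' := Int.natCast_nonneg a'
  have hzero : ((a' : ℤ) - a) = 0 := by
    refine Int.eq_zero_of_abs_lt_dvd hdvd ?_
    rw [abs_sub_lt_iff]
    constructor <;> omega
  have haa : a = a' := by exact_mod_cast sub_eq_zero.mp hzero |>.symm
  subst haa
  refine ⟨rfl, ?_⟩
  have hb : b * q = b' * q := by omega
  exact Nat.eq_of_mul_eq_mul_right hq0 hb

variable (pp : p.Prime) (qq : q.Prime) (hpq : p < q)
include pp qq hpq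

lemma cop : Nat.Coprime p q := (Nat.coprime_primes pp qq).mpr hpq.ne

/-- Every `n ≥ p*q` is representable. -/
lemma rep_of_ge {n : ℕ} (hn : p * q ≤ n) : ∃ α β : ℕ, α * p + β * q = n := by
  by_contra hcon
  have H := frobeniusNumber_pair (cop pp qq hpq) pp.one_lt qq.one_lt
  have hmem : n ∉ AddSubmonoid.closure ({p, q} : Set ℕ) := by
    rw [AddSubmonoid.mem_closure_pair]
    simpa [smul_eq_mul] using hcon
  have hle : n ≤ p * q - p - q := H.2 hmem
  have h2 : p + q ≤ p * q := Nat.add_le_mul pp.one_lt qq.one_lt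
  omega

/-- A representable `n` has a representation with `a < q`; if moreover `n < p*q`
then also `b < p`. -/
lemma rep_bounded {n : ℕ} (hn : n < p * q) (h : ∃ α β : ℕ, α * p + β * q = n) :
    ∃ a b : ℕ, a < q ∧ b < p ∧ a * p + b * q = n := by
  obtain ⟨α, β, h⟩ := h
  obtain ⟨a, b, ha, -, hab⟩ := reduce qq.pos h
  refine ⟨a, b, ha, ?_, hab⟩
  by_contra hb
  push_neg at hb
  have : p * q ≤ b * q := Nat.mul_le_mul_right q hb
  omega

/-- If `n` is not representable then `n + p*q` has a bounded representation. -/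
lemma nonrep_add (hnr : ¬∃ α β : ℕ, α * p + β * q = n) :
    ∃ a b : ℕ, a < q ∧ b < p ∧ a * p + b * q = n + p * q := by
  obtain ⟨α, β, h⟩ := rep_of_ge pp qq hpq (Nat.le_add_left (p*q) n)
  obtain ⟨a, b, ha, -, hab⟩ := reduce qq.pos h
  refine ⟨a, b, ha, ?_, hab⟩
  by_contra hb
  push_neg at hb
  exact hnr ⟨a, b - p, by
    have h1 : a * p + (b - p) * q + p * q = n + p * q := by
      rw [add_assoc, ← Nat.add_mul, Nat.sub_add_cancel hb]; exact hab
    omega⟩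

/-- If `a < q`, `b < p` and `a*p + b*q ≥ p*q`, then `a*p+b*q - p*q` is not representable. -/
lemma bounded_sub_nonrep {a b : ℕ} (ha : a < q) (hb : b < p)
    (hge : p * q ≤ a * p + b * q) : ¬∃ α β : ℕ, α * p + β * q = a * p + b * q - p * q := by
  rintro ⟨α, β, h⟩
  have h' : α * p + (β + p) * q = a * p + b * q := by
    have : α * p + β * q + p * q = a * p + b * q := by omega
    rw [← this]; ring
  obtain ⟨a', b', ha', hb', hab⟩ := reduce qq.pos h'
  obtain ⟨h1, h2⟩ := unique_lt (cop pp qq hpq) ha' ha hab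
  omega


/-- The finite set of non-representable numbers. -/
noncomputable def NR (p q : ℕ) : Finset ℕ :=
  (range (p * q)).filter fun n => ¬∃ α β : ℕ, α * p + β * q = n

omit pp qq hpq in
lemma mem_NR {n : ℕ} : n ∈ NR p q ↔ n < p * q ∧ ¬∃ α β : ℕ, α * p + β * q = n := by
  simp [NR]

/-- The set of exponents appearing with a bounded representation. -/
noncomputable def EE (p q : ℕ) : Finset ℕ :=
  ((range q) ×ˢ (range p)).image fun ab => ab.1 * p + ab.2 * q

omit pp qq hpq in
lemma mem_EE {n : ℕ} : n ∈ EE p q ↔ ∃ a b : ℕ, a < q ∧ b < p ∧ a * p + b * q = n := by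
  simp only [EE, mem_image, mem_product, mem_range, Prod.exists]
  constructor
  · rintro ⟨a, b, ⟨ha, hb⟩, h⟩; exact ⟨a, b, ha, hb, h⟩
  · rintro ⟨a, b, ha, hb, h⟩; exact ⟨a, b, ⟨ha, hb⟩, h⟩

lemma key_union : EE p q ∪ NR p q = (NR p q).image (· + p * q) ∪ range (p * q) := by
  ext n
  simp only [mem_union, mem_EE, mem_NR, mem_image, mem_range]
  by_cases hn : n < p * q
  · constructor
    · intro _; exact Or.inr hn
    · intro _
      by_cases hr : ∃ α β : ℕ, α * p + β * q = n
      · exact Or.inl (rep_bounded pp qq hpq hn hr)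
      · exact Or.inr ⟨hn, hr⟩
  · constructor
    · rintro (⟨a, b, ha, hb, hab⟩ | ⟨h, -⟩)
      · refine Or.inl ⟨n - p * q, ⟨⟨?_, ?_⟩, ?_⟩⟩
        · have l1 : a * p < q * p := mul_lt_mul_of_pos_right ha pp.pos
          have l2 : b * q < p * q := mul_lt_mul_of_pos_right hb qq.pos
          have l3 : q * p = p * q := Nat.mul_comm q p
          omega
        · have := bounded_sub_nonrep pp qq hpq ha hb (by omega)
          rwa [hab] at this
        · omega
      · omega
    · rintro (⟨m, ⟨hm, hmr⟩, rfl⟩ | h)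
      · obtain ⟨a, b, ha, hb, hab⟩ := nonrep_add pp qq hpq hmr
        exact Or.inl ⟨a, b, ha, hb, hab⟩
      · omega

omit pp hpq in
lemma disj1 : Disjoint (EE p q) (NR p q) := by
  rw [Finset.disjoint_left]
  intro n hnE hnS
  rw [mem_EE] at hnE
  rw [mem_NR] at hnS
  obtain ⟨a, b, -, -, hab⟩ := hnE
  exact hnS.2 ⟨a, b, hab⟩

omit pp qq hpq in
lemma disj2 : Disjoint ((NR p q).image (· + p * q)) (range (p * q)) := by
  rw [Finset.disjoint_left]
  intro n hnI hnR
  simp only [mem_image, mem_NR] at hnI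
  rw [mem_range] at hnR
  omega

lemma poly_key :
    cyclotomic (p * q) ℤ = 1 + (X - 1) * ∑ n ∈ NR p q, (X : ℤ[X]) ^ n := by
  have hq0 : 0 < q := qq.pos
  have hp0 : 0 < p := pp.pos
  have hpq0 : 0 < p * q := Nat.mul_pos hp0 hq0
  set f : ℤ[X] := ∑ n ∈ NR p q, (X : ℤ[X]) ^ n with hf
  set A : ℤ[X] := ∑ a ∈ range q, ((X : ℤ[X]) ^ p) ^ a with hA'
  set B : ℤ[X] := ∑ b ∈ range p, ((X : ℤ[X]) ^ q) ^ b with hB'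
  set G : ℤ[X] := ∑ n ∈ range (p * q), (X : ℤ[X]) ^ n with hG'
  -- the sum over EE equals A * B
  have hEinj : Set.InjOn (fun ab : ℕ × ℕ => ab.1 * p + ab.2 * q)
      ((range q) ×ˢ (range p) : Finset (ℕ × ℕ)) := by
    rintro ⟨a, b⟩ hab ⟨a', b'⟩ hab' h
    simp only [mem_coe, mem_product, mem_range] at hab hab'
    obtain ⟨h1, h2⟩ := unique_lt (cop pp qq hpq) hab.1 hab'.1 h
    exact Prod.ext h1 h2
  have hR : ∑ e ∈ EE p q, (X : ℤ[X]) ^ e = A * B := by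
    rw [EE, Finset.sum_image hEinj, Finset.sum_product, hA', hB', Finset.sum_mul_sum]
    refine Finset.sum_congr rfl fun a _ => Finset.sum_congr rfl fun b _ => ?_
    rw [← pow_mul, ← pow_mul, ← pow_add, Nat.mul_comm p a, Nat.mul_comm q b]
  have hSinj : Set.InjOn (· + p * q) (NR p q : Set ℕ) := fun x _ y _ h => by dsimp at h; omega
  have hkey : ∑ e ∈ EE p q, (X : ℤ[X]) ^ e + f = X ^ (p * q) * f + G := by
    rw [hf, ← Finset.sum_union (disj1 qq), key_union pp qq hpq,
      Finset.sum_union (disj2), Finset.mul_sum]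
    congr 1
    rw [Finset.sum_image hSinj]
    exact Finset.sum_congr rfl fun n _ => by rw [← pow_add, Nat.add_comm n (p*q)]
  have hG : G * (X - 1) = X ^ (p * q) - 1 := geom_sum_mul _ _
  have hA : A * ((X : ℤ[X]) ^ p - 1) = X ^ (p * q) - 1 := by
    have := geom_sum_mul ((X : ℤ[X]) ^ p) q
    rwa [← pow_mul] at this
  have hB : B * ((X : ℤ[X]) ^ q - 1) = X ^ (p * q) - 1 := by
    have := geom_sum_mul ((X : ℤ[X]) ^ q) p
    rwa [← pow_mul, Nat.mul_comm q p] at this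
  have hXpq : ((X : ℤ[X]) ^ (p * q) - 1) ≠ 0 := by
    intro h
    have hc : ((X : ℤ[X]) ^ (p * q) - 1).coeff 0 = -1 := by
      simp [coeff_X_pow, hp0.ne, hp0.ne', hq0.ne, hq0.ne']
    rw [h] at hc
    simp at hc
  have hXp : ((X : ℤ[X]) ^ p - 1) ≠ 0 := by
    intro h
    have hc : ((X : ℤ[X]) ^ p - 1).coeff 0 = -1 := by
      simp [coeff_X_pow, hp0.ne, hp0.ne']
    rw [h] at hc
    simp at hc
  have hXq : ((X : ℤ[X]) ^ q - 1) ≠ 0 := by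
    intro h
    have hc : ((X : ℤ[X]) ^ q - 1).coeff 0 = -1 := by
      simp [coeff_X_pow, hq0.ne, hq0.ne']
    rw [h] at hc
    simp at hc
  have hA0 : A ≠ 0 := fun h => hXpq (by rw [← hA, h, zero_mul])
  have hB0 : B ≠ 0 := fun h => hXpq (by rw [← hB, h, zero_mul])
  have hRAB : ∑ e ∈ EE p q, (X : ℤ[X]) ^ e = A * B := hR
  have h1 : (1 + (X - 1) * f) * ((X : ℤ[X]) ^ (p * q) - 1) = (X - 1) * (A * B) := by
    rw [← hRAB]
    linear_combination (-(X - 1 : ℤ[X])) * hkey - hG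
  -- cyclotomic side
  haveI : Fact q.Prime := ⟨qq⟩
  have hpd : p ∈ (p * q).properDivisors :=
    Nat.mem_properDivisors.mpr ⟨dvd_mul_right p q, (Nat.lt_mul_iff_one_lt_right hp0).mpr qq.one_lt⟩
  have hsd : (p * q).divisors \ p.divisors = {q, p * q} := by
    rw [Nat.divisors_mul, pp.divisors, qq.divisors]
    ext a
    simp only [Finset.mem_sdiff, Finset.mem_mul, Finset.mem_insert, Finset.mem_singleton]
    have h2 : 1 < p := pp.one_lt
    have h3 : 1 < q := qq.one_lt
    have h4 : p < p * q := (Nat.lt_mul_iff_one_lt_right hp0).mpr qq.one_lt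
    have h5 : q < p * q := (Nat.lt_mul_iff_one_lt_left hq0).mpr pp.one_lt
    constructor
    · rintro ⟨⟨b, hb, c, hc, rfl⟩, hnot⟩
      rcases hb with rfl | rfl <;> rcases hc with rfl | rfl <;> simp_all <;> omega
    · rintro (rfl | rfl)
      · exact ⟨⟨1, Or.inl rfl, a, Or.inr rfl, one_mul a⟩, by omega⟩
      · exact ⟨⟨p, Or.inr rfl, q, Or.inr rfl, rfl⟩, by omega⟩
  have H := X_pow_sub_one_mul_prod_cyclotomic_eq_X_pow_sub_one_of_dvd ℤ (dvd_mul_right p q) hpq0.ne'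
  have hqne : q ∉ ({p * q} : Finset ℕ) := by
    simp only [Finset.mem_singleton]
    have h5 : q < p * q := (Nat.lt_mul_iff_one_lt_left hq0).mpr pp.one_lt
    omega
  rw [hsd, Finset.prod_insert hqne, Finset.prod_singleton] at H
  have hq1 : cyclotomic q ℤ * (X - 1) = X ^ q - 1 := by
    rw [cyclotomic_prime ℤ q]
    exact geom_sum_mul _ _
  have hcyc : cyclotomic (p * q) ℤ * (((X : ℤ[X]) ^ p - 1) * ((X : ℤ[X]) ^ q - 1)) =
      ((X : ℤ[X]) ^ (p * q) - 1) * (X - 1) := by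
    linear_combination (X - 1 : ℤ[X]) * H - (((X:ℤ[X]) ^ p - 1) * cyclotomic (p*q) ℤ) * hq1
  have hg : (1 + (X - 1) * f) * (((X : ℤ[X]) ^ p - 1) * ((X : ℤ[X]) ^ q - 1)) =
      ((X : ℤ[X]) ^ (p * q) - 1) * (X - 1) := by
    apply mul_right_cancel₀ (mul_ne_zero hA0 hB0)
    linear_combination ((1 + (X - 1) * f) * ((X:ℤ[X]) ^ q - 1) * B) * hA +
      ((1 + (X - 1) * f) * ((X:ℤ[X]) ^ (p * q) - 1)) * hB +
      ((X:ℤ[X]) ^ (p * q) - 1) * h1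
  exact mul_right_cancel₀ (mul_ne_zero hXp hXq) (hcyc.trans hg.symm)

end CycAux

open CycAux Finset

theorem coeff_cyclotomic_pq_sub_one_div (p q : ℕ) (hp : p.Prime) (hq : q.Prime)
    (hpq : p < q) (i : ℕ) :
    ((cyclotomic (p * q) ℤ - 1) /ₘ (X - C 1)).coeff i =
      if ∃ α β : ℕ, α * p + β * q = i then 0 else 1 := by
  have hmain : cyclotomic (p * q) ℤ - 1 = (X - C 1) * ∑ n ∈ NR p q, (X : ℤ[X]) ^ n := by
    rw [poly_key hp hq hpq, C_1]
    ring
  rw [hmain, mul_divByMonic_cancel_left _ (monic_X_sub_C 1), finset_sum_coeff]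
  simp only [coeff_X_pow]
  rw [Finset.sum_ite_eq (NR p q) i fun _ => (1 : ℤ)]
  by_cases hrep : ∃ α β : ℕ, α * p + β * q = i
  · rw [if_pos hrep, if_neg]
    rw [mem_NR]
    exact fun h => h.2 hrep
  · rw [if_neg hrep, if_pos]
    rw [mem_NR]
    refine ⟨?_, hrep⟩
    by_contra h
    exact hrep (rep_of_ge hp hq hpq (by omega))
end

section
/- Let p < q be primes. If p divides i, then the i-th coefficient of the polynomial (Φ_{pq}(x) - 1)/(x - 1) is 0. -/
open Polynomial

theorem coeff_zero_of_dvd (p q : ℕ) (hp : p.Prime) (hq : q.Prime)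
    (hpq : p < q) (i : ℕ) (hdvd : p ∣ i) :
    ((cyclotomic (p * q) ℤ - 1) /ₘ (X - C 1)).coeff i = 0 := by
  have hpq' : p ≠ q := hpq.ne
  have hpdvdq : ¬ p ∣ q := fun h => hpq' ((Nat.prime_dvd_prime_iff_eq hp hq).mp h)
  set f : ℤ[X] := (cyclotomic (p * q) ℤ - 1) /ₘ (X - C 1) with hf
  -- the polynomial is divisible by X - 1 since cyclotomic (p*q) evaluates to 1 at 1
  have hnpp : ¬ IsPrimePow (p * q) := by
    intro h
    obtain ⟨r, k, hr, hk, hrk⟩ := (isPrimePow_nat_iff _).mp h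
    have h1 : p = r := by
      have : p ∣ r ^ k := hrk ▸ Dvd.intro q rfl
      exact (Nat.prime_dvd_prime_iff_eq hp hr).mp (hp.dvd_of_dvd_pow this)
    have h2 : q = r := by
      have : q ∣ r ^ k := hrk ▸ Dvd.intro_left p rfl
      exact (Nat.prime_dvd_prime_iff_eq hq hr).mp (hq.dvd_of_dvd_pow this)
    exact hpq' (h1.trans h2.symm)
  have hroot : IsRoot (cyclotomic (p * q) ℤ - 1) 1 := by
    have h1 : eval 1 (cyclotomic (p * q) ℤ) = 1 := by
      apply eval_one_cyclotomic_not_prime_pow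
      intro r hr k hrk
      apply hnpp
      rw [isPrimePow_nat_iff]
      have hk : 0 < k := by
        rcases Nat.eq_zero_or_pos k with rfl | h
        · exfalso
          rw [pow_zero] at hrk
          nlinarith [hp.one_lt, hq.one_lt, hrk.symm]
        · exact h
      exact ⟨r, k, hr, hk, hrk⟩
    rw [IsRoot.def, eval_sub, eval_one, h1, sub_self]
  have hdiv : (X - C 1) * f = cyclotomic (p * q) ℤ - 1 :=
    mul_divByMonic_eq_iff_isRoot.mpr hroot
  haveI : Fact q.Prime := ⟨hq⟩
  -- key identity: f * (X^q - 1) = expand p (cyclotomic q) - cyclotomic q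
  have hkey : f * (X ^ q - 1) =
      expand ℤ p (cyclotomic q ℤ) - cyclotomic q ℤ := by
    have h1 : X ^ q - 1 = (X - C 1) * cyclotomic q ℤ := by
      rw [← cyclotomic_prime_mul_X_sub_one ℤ q, mul_comm, C_1]
    rw [h1, ← mul_assoc, mul_comm f, hdiv, sub_mul, one_mul, mul_comm p q,
      ← cyclotomic_expand_eq_cyclotomic_mul hp hpdvdq]
  set g : ℤ[X] := expand ℤ p (cyclotomic q ℤ) - cyclotomic q ℤ with hg
  -- coefficient of g at indices k + t*q with p ∣ k, t ≥ 1 is zero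
  have hgcoeff : ∀ k t : ℕ, p ∣ k → 1 ≤ t → g.coeff (k + t * q) = 0 := by
    intro k t hk ht
    have hdegq : (cyclotomic q ℤ).natDegree = q - 1 := by
      rw [natDegree_cyclotomic, Nat.totient_prime hq]
    have hc1 : (cyclotomic q ℤ).coeff (k + t * q) = 0 := by
      apply coeff_eq_zero_of_natDegree_lt
      rw [hdegq]
      have : q ≤ t * q := Nat.le_mul_of_pos_left q ht
      omega
    have hc2 : (expand ℤ p (cyclotomic q ℤ)).coeff (k + t * q) = 0 := by
      rw [coeff_expand hp.pos]
      split_ifs with hpd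
      · apply coeff_eq_zero_of_natDegree_lt
        rw [hdegq]
        -- p ∣ k + t*q and p ∣ k so p ∣ t*q, p ∤ q so p ∣ t, so t ≥ p
        have hpt : p ∣ t := by
          have : p ∣ t * q := (Nat.dvd_add_right hk).mp hpd
          exact (hp.dvd_mul.mp this).resolve_right hpdvdq
        have hpt' : p ≤ t := Nat.le_of_dvd (by omega) hpt
        have hineq : p * q ≤ k + t * q := by
          calc p * q ≤ t * q := Nat.mul_le_mul_right q hpt'
          _ ≤ k + t * q := Nat.le_add_left _ _
        have := Nat.div_le_div_right (c := p) hineq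
        rw [Nat.mul_div_cancel_left q hp.pos] at this
        have hq1 : 1 ≤ q := hq.one_lt.le
        omega
      · rfl
    rw [hg, coeff_sub, hc1, hc2, sub_zero]
  -- recurrence: f.coeff n = f.coeff (n + q) + g.coeff (n + q)
  have hrec : ∀ n : ℕ, f.coeff n = f.coeff (n + q) + g.coeff (n + q) := by
    intro n
    have := congrArg (fun P => P.coeff (n + q)) hkey
    simp only [mul_sub, mul_one, coeff_sub, coeff_mul_X_pow] at this
    linarith [this]
  -- hence f.coeff i = f.coeff (i + t*q) for all t
  have hstep : ∀ t : ℕ, f.coeff i = f.coeff (i + t * q) := by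
    intro t
    induction t with
    | zero => simp
    | succ t ih =>
      rw [ih, hrec (i + t * q), add_assoc, ← Nat.succ_mul,
        hgcoeff i (t + 1) hdvd (by omega), add_zero]
  have hT : f.coeff i = f.coeff (i + (f.natDegree + 1) * q) := hstep _
  rw [hT]
  apply coeff_eq_zero_of_natDegree_lt
  have hq1 : 1 ≤ q := hq.one_lt.le
  calc f.natDegree < f.natDegree + 1 := Nat.lt_succ_self _
    _ ≤ (f.natDegree + 1) * q := Nat.le_mul_of_pos_right _ hq.pos
    _ ≤ i + (f.natDegree + 1) * q := Nat.le_add_left _ _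
end

section
/- Let p < q be primes. For 0 ≤ i < q, the i-th coefficient of (Φ_{pq}(x) - 1)/(x - 1) is 0 if and only if p divides i. -/
open Polynomial

theorem coeff_zero_iff_dvd (p q : ℕ) (hp : p.Prime) (hq : q.Prime)
    (hpq : p < q) (i : ℕ) (hi : i < q) :
    ((cyclotomic (p * q) ℤ - 1) /ₘ (X - C 1)).coeff i = 0 ↔ p ∣ i := by
  have hp2 : 2 ≤ p := hp.two_le
  have hq2 : 2 ≤ q := hq.two_le
  haveI : Fact q.Prime := ⟨hq⟩
  set h : ℤ[X] := (cyclotomic (p * q) ℤ - 1) /ₘ (X - C 1) with hh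
  -- step 1 : (X-1) * Φq = X^q - 1
  have h1 : (X - 1 : ℤ[X]) * cyclotomic q ℤ = X ^ q - 1 := by
    rw [cyclotomic_prime, mul_comm]
    exact geom_sum_mul X q
  -- step 2 : Φ(pq) * Φq = expand p Φq
  have h2 : cyclotomic (p * q) ℤ * cyclotomic q ℤ = expand ℤ p (cyclotomic q ℤ) := by
    rw [mul_comm p q, cyclotomic_expand_eq_cyclotomic_mul hp
      (fun hd => by have := (Nat.prime_dvd_prime_iff_eq hp hq).mp hd; omega)]
  -- step 3 : (X^p - 1) * expand p Φq = X^(pq) - 1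
  have h3 : (X ^ p - 1 : ℤ[X]) * expand ℤ p (cyclotomic q ℤ) = X ^ (p * q) - 1 := by
    have : ((X : ℤ[X]) ^ p - 1) = expand ℤ p (X - 1) := by
      simp [map_sub, expand_X]
    rw [this, ← map_mul, h1, map_sub, map_pow, expand_X, map_one, ← pow_mul]
  -- main identity
  have M : (X ^ p - 1 : ℤ[X]) * ((X ^ q - 1) * cyclotomic (p * q) ℤ)
      = (X ^ (p * q) - 1) * (X - 1) := by
    calc (X ^ p - 1 : ℤ[X]) * ((X ^ q - 1) * cyclotomic (p * q) ℤ)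
        = (X - 1) * ((X ^ p - 1) * (cyclotomic (p * q) ℤ * cyclotomic q ℤ)) := by
          rw [← h1]; ring
      _ = (X - 1) * (X ^ (p * q) - 1) := by rw [h2, h3]
      _ = (X ^ (p * q) - 1) * (X - 1) := by ring
  -- Φ(pq) - 1 = (X - C 1) * h
  have heval : (cyclotomic (p * q) ℤ).eval 1 = 1 := by
    apply eval_one_cyclotomic_not_prime_pow
    intro r hr k hk
    have hpd : p ∣ r ^ k := hk ▸ Dvd.intro q rfl
    have hqd : q ∣ r ^ k := hk ▸ Dvd.intro_left p rfl
    have e1 := (Nat.prime_dvd_prime_iff_eq hp hr).mp (hp.dvd_of_dvd_pow hpd)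
    have e2 := (Nat.prime_dvd_prime_iff_eq hq hr).mp (hq.dvd_of_dvd_pow hqd)
    omega
  have hfac : cyclotomic (p * q) ℤ - 1 = (X - C 1) * h := by
    have := modByMonic_add_div (cyclotomic (p * q) ℤ - 1) (X - C (1 : ℤ))
    rw [modByMonic_X_sub_C_eq_C_eval, eval_sub, heval, eval_one, sub_self, C_0,
      zero_add] at this
    rw [hh]
    exact this.symm
  -- the recurrence identity
  have M2 : (X ^ q - 1 : ℤ[X]) * (h * X ^ (p + 1) - h * X ^ p - h * X + h)
      = (X ^ (p * q) - 1) * (X - 1) - (X ^ p - 1) * (X ^ q - 1) := by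
    have hc : cyclotomic (p * q) ℤ = (X - C 1) * h + 1 := by
      rw [← hfac]; ring
    rw [hc] at M
    rw [← M]
    simp only [C_1]
    ring
  -- coefficient recurrence, for i < q
  have key : ∀ j : ℕ, j < q →
      (if p + 1 ≤ j then h.coeff (j - (p + 1)) else 0)
        - (if p ≤ j then h.coeff (j - p) else 0)
        - (if 1 ≤ j then h.coeff (j - 1) else 0) + h.coeff j
      = (if j = 1 then 1 else 0) - (if j = p then 1 else 0) := by
    intro j hj
    have := congrArg (fun f : ℤ[X] => f.coeff j) M2
    have hL : ((X ^ q - 1 : ℤ[X]) * (h * X ^ (p + 1) - h * X ^ p - h * X + h)).coeff j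
        = -((if p + 1 ≤ j then h.coeff (j - (p + 1)) else 0)
        - (if p ≤ j then h.coeff (j - p) else 0)
        - (if 1 ≤ j then h.coeff (j - 1) else 0) + h.coeff j) := by
      rw [sub_mul, one_mul, coeff_sub, mul_comm, coeff_mul_X_pow',
        if_neg (by omega : ¬ q ≤ j)]
      simp only [coeff_sub, coeff_add, zero_sub, neg_inj]
      rw [coeff_mul_X_pow', coeff_mul_X_pow']
      have : (h * X : ℤ[X]) = h * X ^ 1 := by ring
      rw [this, coeff_mul_X_pow']
    have hR : ((X ^ (p * q) - 1 : ℤ[X]) * (X - 1)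
        - (X ^ p - 1) * (X ^ q - 1)).coeff j
        = -((if j = 1 then 1 else 0) - (if j = p then 1 else 0)) := by
      have e1 : j ≠ p * q + 1 := by nlinarith
      have e2 : j ≠ p * q := by nlinarith
      have e3 : j ≠ p + q := by omega
      have e4 : j ≠ q := by omega
      have expand : ((X ^ (p * q) - 1 : ℤ[X]) * (X - 1)
          - (X ^ p - 1) * (X ^ q - 1))
          = X ^ (p * q) * X - X ^ (p * q) - X ^ p * X ^ q + X ^ q + X ^ p - X := by
        ring
      rw [expand]
      simp only [coeff_add, coeff_sub, ← pow_succ, ← pow_add, coeff_X_pow, coeff_X,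
        if_neg e1, if_neg e2, if_neg e3, if_neg e4]
      split_ifs <;> omega
    rw [hL, hR] at this
    linarith
  -- the closed form
  have main : ∀ j : ℕ, j < q → h.coeff j = if p ∣ j then 0 else 1 := by
    intro j
    induction j using Nat.strong_induction_on with
    | _ j ih =>
      intro hj
      have k := key j hj
      rcases lt_trichotomy j p with hcase | hcase | hcase
      · -- j < p
        rw [if_neg (by omega : ¬ p + 1 ≤ j), if_neg (by omega : ¬ p ≤ j),
          if_neg (by omega : ¬ j = p)] at k
        rcases Nat.eq_zero_or_pos j with rfl | hj0
        · simp only [if_neg (by omega : ¬ (0:ℕ) = 1)] at k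
          rw [if_pos (dvd_zero p)]
          simpa using k
        · rcases eq_or_ne j 1 with rfl | hj1
          · rw [if_pos le_rfl, if_pos rfl] at k
            have h0 : h.coeff 0 = 0 := by
              have := ih 0 (by omega) (by omega)
              simpa using this
            rw [if_neg (by rw [Nat.dvd_one]; omega : ¬ p ∣ 1)]
            simp only [Nat.sub_self, h0] at k
            linarith
          · rw [if_pos (by omega : 1 ≤ j), if_neg hj1] at k
            have hprev := ih (j - 1) (by omega) (by omega)
            rw [if_neg (by
              intro hd
              have := Nat.le_of_dvd (by omega) hd
              omega : ¬ p ∣ (j - 1))] at hprev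
            rw [if_neg (by
              intro hd
              have := Nat.le_of_dvd (by omega) hd
              omega : ¬ p ∣ j)]
            rw [hprev] at k
            linarith
      · -- j = p
        rw [if_neg (by omega : ¬ p + 1 ≤ j), if_pos (by omega : p ≤ j),
          if_pos (by omega : 1 ≤ j), if_neg (by omega : ¬ j = 1),
          if_pos hcase, (by omega : j - p = 0)] at k
        have h0 : h.coeff 0 = 0 := by
          have := ih 0 (by omega) (by omega)
          simpa using this
        have hprev := ih (j - 1) (by omega) (by omega)
        rw [if_neg (by
          intro hd
          have := Nat.le_of_dvd (by omega) hd
          omega : ¬ p ∣ (j - 1))] at hprev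
        rw [if_pos (hcase ▸ dvd_rfl : p ∣ j)]
        rw [h0, hprev] at k
        linarith
      · -- j > p
        rw [if_pos (by omega : p + 1 ≤ j), if_pos (by omega : p ≤ j),
          if_pos (by omega : 1 ≤ j), if_neg (by omega : ¬ j = 1),
          if_neg (by omega : ¬ j = p)] at k
        have ha := ih (j - (p + 1)) (by omega) (by omega)
        have hb := ih (j - p) (by omega) (by omega)
        have hc := ih (j - 1) (by omega) (by omega)
        have da : p ∣ j - (p + 1) ↔ p ∣ j - 1 := by
          constructor <;> intro hd
          · have : j - 1 = (j - (p + 1)) + p := by omega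
            rw [this]; exact hd.add dvd_rfl
          · have : j - (p + 1) = (j - 1) - p := by omega
            rw [this]; exact (Nat.dvd_sub hd dvd_rfl)
        have db : p ∣ j - p ↔ p ∣ j := by
          constructor <;> intro hd
          · have : j = (j - p) + p := by omega
            rw [this]; exact hd.add dvd_rfl
          · exact Nat.dvd_sub hd dvd_rfl
        rw [ha, hb, hc] at k
        by_cases hdj : p ∣ j
        · rw [if_pos hdj]
          rw [if_pos (db.mpr hdj)] at k
          by_cases hd1 : p ∣ j - 1
          · rw [if_pos hd1, if_pos (da.mpr hd1)] at k; linarith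
          · rw [if_neg hd1, if_neg (fun hx => hd1 (da.mp hx))] at k; linarith
        · rw [if_neg hdj]
          rw [if_neg (fun hx => hdj (db.mp hx))] at k
          by_cases hd1 : p ∣ j - 1
          · rw [if_pos hd1, if_pos (da.mpr hd1)] at k; linarith
          · rw [if_neg hd1, if_neg (fun hx => hd1 (da.mp hx))] at k; linarith
  rw [main i hi]
  by_cases hd : p ∣ i
  · simp [hd]
  · simp [hd]
end

section
/- Let p < q be primes and 0 ≤ i ≤ φ(pq) - 1. Writing b_i for the i-th coefficient of (Φ_{pq}(x) - 1)/(x - 1), exactly one of b_i and b_{φ(pq)-1-i} is 0 and the other is 1; equivalently, b_i + b_{φ(pq)-1-i} = 1. -/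
open Polynomial

section Aux

variable {p q : ℕ}

lemma aux_divisors (hp : p.Prime) (hq : q.Prime) (hpq : p < q) :
    Nat.divisors (p * q) = {1, p, q, p * q} := by
  rw [Nat.divisors_mul, hp.divisors, hq.divisors]
  ext d
  simp only [Finset.mem_mul, Finset.mem_insert, Finset.mem_singleton]
  constructor
  · rintro ⟨a, ha, b, hb, rfl⟩
    rcases ha with rfl | rfl
    · rcases hb with rfl | rfl
      · simp
      · simp
    · rcases hb with rfl | rfl
      · simp
      · simp
  · rintro (h | h | h | h)
    · exact ⟨1, Or.inl rfl, 1, Or.inl rfl, by simp [h]⟩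
    · exact ⟨p, Or.inr rfl, 1, Or.inl rfl, by simp [h]⟩
    · exact ⟨1, Or.inl rfl, q, Or.inr rfl, by simp [h]⟩
    · exact ⟨p, Or.inr rfl, q, Or.inr rfl, h.symm⟩

lemma aux_key (hp : p.Prime) (hq : q.Prime) (hpq : p < q) :
    ((X : ℤ[X]) ^ p - 1) * (X ^ q - 1) * cyclotomic (p * q) ℤ
      = (X ^ (p * q) - 1) * (X - 1) := by
  have : Fact p.Prime := ⟨hp⟩
  have : Fact q.Prime := ⟨hq⟩
  have hppos := hp.pos
  have hqpos := hq.pos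
  have h := prod_cyclotomic_eq_X_pow_sub_one (Nat.mul_pos hppos hqpos) ℤ
  rw [aux_divisors hp hq hpq] at h
  have h1p : (1 : ℕ) ≠ p := hp.one_lt.ne
  have h1q : (1 : ℕ) ≠ q := hq.one_lt.ne
  have hpq' : p ≠ q := hpq.ne
  have h1pq : (1 : ℕ) ≠ p * q := by
    intro h'; exact hp.one_lt.ne' (Nat.eq_one_of_mul_eq_one_right h'.symm)
  have hppq : p ≠ p * q := by
    intro h'
    nlinarith [hp.two_le, hq.two_le]
  have hqpq : q ≠ p * q := by
    intro h'
    nlinarith [hp.two_le, hq.two_le]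
  rw [Finset.prod_insert (by simp [h1p, h1q, h1pq]),
    Finset.prod_insert (by simp [hpq', hppq]),
    Finset.prod_insert (by simp [hqpq]), Finset.prod_singleton, cyclotomic_one] at h
  have hcp := cyclotomic_prime_mul_X_sub_one ℤ p
  have hcq := cyclotomic_prime_mul_X_sub_one ℤ q
  calc ((X : ℤ[X]) ^ p - 1) * (X ^ q - 1) * cyclotomic (p * q) ℤ
      = (cyclotomic p ℤ * (X - 1)) * (cyclotomic q ℤ * (X - 1)) * cyclotomic (p * q) ℤ := by
        rw [hcp, hcq]
    _ = ((X - 1) * (cyclotomic p ℤ * (cyclotomic q ℤ * cyclotomic (p * q) ℤ))) * (X - 1) := by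
        ring
    _ = (X ^ (p * q) - 1) * (X - 1) := by rw [h]

lemma aux_totient (hp : p.Prime) (hq : q.Prime) (hpq : p < q) :
    p + q + Nat.totient (p * q) = p * q + 1 := by
  rw [Nat.totient_mul ((Nat.coprime_primes hp hq).mpr hpq.ne), Nat.totient_prime hp, Nat.totient_prime hq]
  obtain ⟨a, rfl⟩ : ∃ a, p = a + 1 := ⟨p - 1, (Nat.succ_pred_eq_of_pos hp.pos).symm⟩
  obtain ⟨b, rfl⟩ : ∃ b, q = b + 1 := ⟨q - 1, (Nat.succ_pred_eq_of_pos hq.pos).symm⟩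
  simp only [Nat.add_sub_cancel]
  ring

lemma aux_reflect_X_pow_sub_one (n : ℕ) :
    reflect n ((X : ℤ[X]) ^ n - 1) = -(X ^ n - 1) := by
  have : ((X : ℤ[X]) ^ n - 1) = X ^ n - C 1 := by simp
  rw [this, reflect_sub, reflect_C, reflect_monomial, revAt_le (le_refl n)]
  simp

lemma aux_palindrome (hp : p.Prime) (hq : q.Prime) (hpq : p < q) :
    reflect (Nat.totient (p * q)) (cyclotomic (p * q) ℤ) = cyclotomic (p * q) ℤ := by
  have hkey := aux_key hp hq hpq
  have hXp : ((X : ℤ[X]) ^ p - 1).natDegree = p := by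
    simpa using (natDegree_X_pow_sub_C (n := p) (r := (1 : ℤ)))
  have hXq : ((X : ℤ[X]) ^ q - 1).natDegree = q := by
    simpa using (natDegree_X_pow_sub_C (n := q) (r := (1 : ℤ)))
  have hdeg : (((X : ℤ[X]) ^ p - 1) * (X ^ q - 1)).natDegree ≤ p + q :=
    (natDegree_mul_le).trans (by rw [hXp, hXq])
  have hΦdeg : (cyclotomic (p * q) ℤ).natDegree ≤ Nat.totient (p * q) :=
    (natDegree_cyclotomic (p * q) ℤ).le
  have hrefl := congrArg (reflect (p + q + Nat.totient (p * q))) hkey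
  rw [reflect_mul _ _ hdeg hΦdeg, reflect_mul _ _ hXp.le hXq.le] at hrefl
  rw [aux_totient hp hq hpq] at hrefl
  have hXpq : ((X : ℤ[X]) ^ (p * q) - 1).natDegree = p * q := by
    simpa using (natDegree_X_pow_sub_C (n := p * q) (r := (1 : ℤ)))
  have hX1 : ((X : ℤ[X]) - 1).natDegree ≤ 1 := by
    simpa using (natDegree_X_sub_C (1 : ℤ)).le
  rw [reflect_mul _ _ hXpq.le hX1] at hrefl
  have hr1 : reflect 1 ((X : ℤ[X]) - 1) = -(X - 1) := by
    simpa using aux_reflect_X_pow_sub_one 1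
  rw [aux_reflect_X_pow_sub_one, aux_reflect_X_pow_sub_one, aux_reflect_X_pow_sub_one, hr1]
    at hrefl
  have hne : ((X : ℤ[X]) ^ p - 1) * (X ^ q - 1) ≠ 0 := by
    apply mul_ne_zero <;>
    · intro h
      apply_fun natDegree at h
      simp [hXp, hXq, hp.pos.ne', hq.pos.ne'] at h
  apply mul_left_cancel₀ hne
  calc ((X : ℤ[X]) ^ p - 1) * (X ^ q - 1) * reflect (Nat.totient (p * q)) (cyclotomic (p * q) ℤ)
      = -(X ^ p - 1) * -(X ^ q - 1) * reflect (Nat.totient (p * q)) (cyclotomic (p * q) ℤ) := by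
        ring
    _ = -(X ^ (p * q) - 1) * -(X - 1) := hrefl
    _ = (X ^ (p * q) - 1) * (X - 1) := by ring
    _ = ((X : ℤ[X]) ^ p - 1) * (X ^ q - 1) * cyclotomic (p * q) ℤ := hkey.symm

lemma aux_not_prime_pow (hp : p.Prime) (hq : q.Prime) (hpq : p < q) :
    ¬ IsPrimePow (p * q) := by
  rintro ⟨r, k, hr, hk, hrk⟩
  have hr' : r.Prime := hr.nat_prime
  have h1 : p = r := by
    have : p ∣ r ^ k := hrk ▸ Dvd.intro q rfl
    exact (Nat.prime_dvd_prime_iff_eq hp hr').mp (hp.dvd_of_dvd_pow this)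
  have h2 : q = r := by
    have : q ∣ r ^ k := hrk ▸ Dvd.intro_left p rfl
    exact (Nat.prime_dvd_prime_iff_eq hq hr').mp (hq.dvd_of_dvd_pow this)
  exact hpq.ne (h1.trans h2.symm)

end Aux

theorem coeff_add_reversed_coeff (p q : ℕ) (hp : p.Prime) (hq : q.Prime)
    (hpq : p < q) (i : ℕ) (hi : i ≤ Nat.totient (p * q) - 1) :
    ((cyclotomic (p * q) ℤ - 1) /ₘ (X - C 1)).coeff i +
      ((cyclotomic (p * q) ℤ - 1) /ₘ (X - C 1)).coeff (Nat.totient (p * q) - 1 - i)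
      = 1 := by
  set n := Nat.totient (p * q) with hn
  set Φ := cyclotomic (p * q) ℤ with hΦ
  set f := (Φ - 1) /ₘ (X - C 1) with hf
  have hnpos : 0 < n := Nat.totient_pos.mpr (Nat.mul_pos hp.pos hq.pos)
  have hmonic : Monic ((X : ℤ[X]) - C 1) := monic_X_sub_C 1
  -- exact division
  have hdvd : ((X : ℤ[X]) - C 1) ∣ (Φ - 1) := by
    rw [dvd_iff_isRoot]
    have hnpp : ∀ {r : ℕ}, r.Prime → ∀ k : ℕ, r ^ k ≠ p * q := by
      intro r hr k hrk
      rcases Nat.eq_zero_or_pos k with rfl | hk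
      · simp only [pow_zero] at hrk
        nlinarith [hp.two_le, hq.two_le]
      · exact aux_not_prime_pow hp hq hpq ⟨r, k, hr.prime, hk, hrk⟩
    simp [IsRoot, hΦ, eval_one_cyclotomic_not_prime_pow hnpp]
  have heq : ((X : ℤ[X]) - C 1) * f = Φ - 1 := by
    have := modByMonic_add_div (Φ - 1) (X - C 1)
    rwa [(modByMonic_eq_zero_iff_dvd hmonic).mpr hdvd, zero_add] at this
  -- degrees
  have hΦdeg : Φ.natDegree = n := natDegree_cyclotomic (p * q) ℤ
  have hΦ1deg : (Φ - 1).natDegree = n := by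
    rw [show (1 : ℤ[X]) = C 1 by simp, natDegree_sub_C, hΦdeg]
  have hfdeg : f.natDegree = n - 1 := by
    rw [hf, natDegree_divByMonic _ hmonic, hΦ1deg, natDegree_X_sub_C]
  -- reflect computation
  have hrefl : reflect n (Φ - 1) = Φ - X ^ n := by
    rw [reflect_sub, show (1 : ℤ[X]) = C 1 by simp, reflect_C, aux_palindrome hp hq hpq]
    simp
    exact hΦ.symm
  have hrefl2 : reflect n (Φ - 1) = -(X - C 1) * reflect (n - 1) f := by
    have h1 : 1 + (n - 1) = n := by omega
    have hX1 : ((X : ℤ[X]) - C 1).natDegree ≤ 1 := (natDegree_X_sub_C 1).le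
    calc reflect n (Φ - 1) = reflect (1 + (n - 1)) ((X - C 1) * f) := by rw [heq, h1]
      _ = reflect 1 (X - C 1) * reflect (n - 1) f := reflect_mul _ _ hX1 hfdeg.le
      _ = -(X - C 1) * reflect (n - 1) f := by
          congr 1
          rw [reflect_sub, reflect_C, reflect_one_X]
          simp only [pow_one, map_one, one_mul]
          ring
  -- combine
  have hsum : ((X : ℤ[X]) - C 1) * (f + reflect (n - 1) f)
      = (X - C 1) * (∑ k ∈ Finset.range n, X ^ k) := by
    have hgeom : (∑ k ∈ Finset.range n, (X : ℤ[X]) ^ k) * (X - 1) = X ^ n - 1 :=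
      geom_sum_mul X n
    have h2 : ((X : ℤ[X]) - C 1) * reflect (n - 1) f = X ^ n - Φ := by
      have := hrefl2.symm.trans hrefl
      rw [neg_mul] at this
      linear_combination -this
    rw [mul_add, heq, h2]
    rw [show ((X : ℤ[X]) - C 1) = X - 1 by simp, mul_comm, hgeom]
    ring
  have hXne : ((X : ℤ[X]) - C 1) ≠ 0 := X_sub_C_ne_zero 1
  have hfinal : f + reflect (n - 1) f = ∑ k ∈ Finset.range n, X ^ k :=
    mul_left_cancel₀ hXne hsum
  have hcoeff := congrArg (fun P => coeff P i) hfinal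
  simp only [coeff_add, coeff_reflect, finset_sum_coeff, coeff_X_pow] at hcoeff
  rw [revAt_le hi] at hcoeff
  rw [hcoeff]
  rw [Finset.sum_eq_single i]
  · simp
  · intro b _ hb; simp [hb.symm]
  · intro h; exact absurd (Finset.mem_range.mpr (by omega)) h
end

section
/- Let p be a prime and M = p^s with s ≥ 1. For any integers 0 ≤ j < i < M, there exists a polynomial u(x) ∈ ℤ[x] with deg u < φ(M) such that (x^i - x^j) · u(x) ≡ p (mod Φ_M(x)) and every coefficient of u has absolute value at most p - 1. -/
open Polynomial Finset

set_option maxHeartbeats 2000000 in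
theorem scaled_inverse_prime_power (p s : ℕ) (hp : p.Prime) (hs : 1 ≤ s)
    (i j : ℕ) (hji : j < i) (hiM : i < p ^ s) :
    ∃ u : Polynomial ℤ, u.degree < (Nat.totient (p ^ s) : ℕ) ∧
      cyclotomic (p ^ s) ℤ ∣ ((X ^ i - X ^ j) * u - C (p : ℤ)) ∧
      ∀ n, |u.coeff n| ≤ (p : ℤ) - 1 := by
  have hp1 : 1 < p := hp.one_lt
  set M := p ^ s with hM
  set q := p ^ (s - 1) with hq
  have hs1 : s - 1 + 1 = s := by omega
  have hMq : M = p * q := by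
    rw [hM, hq, ← pow_succ', hs1]
  have hq0 : 0 < q := Nat.pow_pos (by omega)
  have hM0 : 0 < M := Nat.pow_pos (by omega)
  set k := i - j with hk
  have hk0 : 0 < k := by omega
  have hkM : k < M := by omega
  have hjM : j < M := by omega
  set t := k.factorization p with ht
  set m := ordCompl[p] k with hm
  have hkm : p ^ t * m = k := Nat.ordProj_mul_ordCompl_eq_self k p
  have hpm : ¬ p ∣ m := Nat.not_dvd_ordCompl hp hk0.ne'
  have hm0 : 0 < m := Nat.ordCompl_pos p hk0.ne'
  have hts : t < s := by
    by_contra h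
    have h1 : p ^ s ≤ p ^ t := Nat.pow_le_pow_right (by omega) (by omega)
    have h2 : p ^ t ≤ k := by
      calc p ^ t ≤ p ^ t * m := Nat.le_mul_of_pos_right _ hm0
      _ = k := hkm
    omega
  set P := p ^ (s - 1 - t) with hP
  set N := p ^ (s - t) with hN
  have hP0 : 0 < P := Nat.pow_pos (by omega)
  have hNP : N = P * p := by
    rw [hN, hP, ← pow_succ]
    congr 1
    omega
  have hqP : P * p ^ t = q := by
    rw [hP, hq, ← pow_add]
    congr 1
    omega
  -- definitions
  set e : ℕ → ℕ := fun r => (M - j + r * k) % M with he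
  set c : ℕ → ℕ := fun r => ((Ico 1 p).filter fun d => r < d * P).card with hc
  set w : Polynomial ℤ := ∑ r ∈ range N, C (-(c r : ℤ)) * X ^ e r with hw
  set g : Polynomial ℤ := ∑ b ∈ range q, C (w.coeff (b + (p - 1) * q)) * X ^ b with hg
  set Φ : Polynomial ℤ := cyclotomic M ℤ with hΦ
  -- injectivity of exponents
  have hinj : ∀ r < N, ∀ r' < N, e r = e r' → r = r' := by
    have key : ∀ r' r, r' ≤ r → r < N → e r = e r' → r = r' := by
      intro r' r hle hrN hee
      have h1 : (M - j + r * k) % M = (M - j + r' * k) % M := hee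
      have h2 : r * k ≡ r' * k [MOD M] := (Nat.ModEq.add_left_cancel' (M - j) h1.symm).symm
      have h3 : M ∣ r * k - r' * k := (Nat.modEq_iff_dvd' (Nat.mul_le_mul_right k hle)).mp h2.symm
      have h4 : r * k - r' * k = ((r - r') * m) * p ^ t := by
        rw [← Nat.sub_mul, ← hkm]; ring
      have h5 : N * p ^ t ∣ ((r - r') * m) * p ^ t := by
        rw [← h4]
        have : N * p ^ t = M := by rw [hN, hM, ← pow_add]; congr 1; omega
        rw [this]; exact h3
      have h6 : N ∣ (r - r') * m := (Nat.mul_dvd_mul_iff_right ((Nat.pow_pos (by omega) : 0 < p ^ t))).mp h5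
      have h7 : N.Coprime m := Nat.Coprime.pow_left _ ((Nat.Prime.coprime_iff_not_dvd hp).mpr hpm)
      have h8 : N ∣ r - r' := h7.dvd_of_dvd_mul_right h6
      have h9 : r - r' < N := by omega
      have h10 := Nat.eq_zero_of_dvd_of_lt h8 h9
      omega
    intro r hr r' hr' hee
    rcases le_total r' r with h | h
    · exact key r' r h hr hee
    · exact (key r r' h hr' hee.symm).symm
  have hcle : ∀ r, (c r : ℤ) ≤ (p : ℤ) - 1 := by
    intro r
    have h1 : c r ≤ p - 1 := by
      have := Finset.card_filter_le (Ico 1 p) (fun d => r < d * P)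
      simpa [Nat.card_Ico] using this
    have : (c r : ℤ) ≤ ((p - 1 : ℕ) : ℤ) := by exact_mod_cast h1
    omega
  have hwc : ∀ n, w.coeff n = ∑ r ∈ range N, if e r = n then -(c r : ℤ) else 0 := by
    intro n
    rw [hw, finset_sum_coeff]
    refine Finset.sum_congr rfl fun r _ => ?_
    rw [coeff_C_mul, coeff_X_pow]
    by_cases h : e r = n
    · rw [if_pos h, if_pos h.symm, mul_one]
    · rw [if_neg h, if_neg (Ne.symm h), mul_zero]
  have hwle : ∀ n, w.coeff n ≤ 0 := by
    intro n
    rw [hwc]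
    refine Finset.sum_nonpos fun r _ => ?_
    split
    · simp
    · rfl
  have hwlb : ∀ n, -((p : ℤ) - 1) ≤ w.coeff n := by
    intro n
    rw [hwc]
    by_cases hex : ∃ r ∈ range N, e r = n
    · obtain ⟨r₀, hr₀, her₀⟩ := hex
      rw [Finset.sum_eq_single_of_mem r₀ hr₀ (fun r hr hne => by
        simp only [Finset.mem_range] at hr hr₀
        rw [if_neg]
        intro h
        exact hne (hinj r hr r₀ hr₀ (h.trans her₀.symm)))]
      rw [if_pos her₀]
      have := hcle r₀
      omega
    · push_neg at hex
      rw [Finset.sum_eq_zero fun r hr => by rw [if_neg (hex r hr)]]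
      have : (1 : ℤ) ≤ p := by exact_mod_cast hp1.le
      omega
  have hwhi : ∀ n, M ≤ n → w.coeff n = 0 := by
    intro n hn
    rw [hwc]
    refine Finset.sum_eq_zero fun r _ => ?_
    rw [if_neg]
    intro h
    have : e r < M := Nat.mod_lt _ hM0
    omega
  have hgc : ∀ n, g.coeff n = if n < q then w.coeff (n + (p - 1) * q) else 0 := by
    intro n
    rw [hg, finset_sum_coeff]
    by_cases hn : n < q
    · rw [if_pos hn]
      rw [Finset.sum_eq_single_of_mem n (Finset.mem_range.mpr hn) (fun b hb hne => by
        simp [coeff_C_mul, coeff_X_pow, hne, Ne.symm hne])]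
      simp [coeff_C_mul, coeff_X_pow]
    · rw [if_neg hn]
      refine Finset.sum_eq_zero fun b hb => ?_
      simp only [Finset.mem_range] at hb
      simp [coeff_C_mul, coeff_X_pow]
      intro h
      omega
  have hΦgeom : Φ = ∑ a ∈ range p, (X ^ q : Polynomial ℤ) ^ a := by
    have h := cyclotomic_prime_pow_eq_geom_sum (R := ℤ) (p := p) (n := s - 1) hp
    rw [hs1] at h
    exact h
  have hΦg : ∀ n, (Φ * g).coeff n = if n < M then w.coeff (n % q + (p - 1) * q) else 0 := by
    intro n
    have hsplit : Φ * g = ∑ a ∈ range p, g * X ^ (q * a) := by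
      rw [hΦgeom, Finset.sum_mul]
      refine Finset.sum_congr rfl fun a _ => ?_
      rw [← pow_mul, mul_comm]
    rw [hsplit, finset_sum_coeff]
    have hterm : ∀ a, (g * X ^ (q * a)).coeff n = if q * a ≤ n then g.coeff (n - q * a) else 0 :=
      fun a => coeff_mul_X_pow' g (q * a) n
    by_cases hn : n < M
    · rw [if_pos hn]
      have hn' : n < p * q := by rw [hMq] at hn; exact hn
      have ha₀ : n / q < p := by rw [Nat.div_lt_iff_lt_mul hq0]; exact hn'
      have hdm := Nat.div_add_mod n q
      have hmod := Nat.mod_lt n hq0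
      rw [Finset.sum_eq_single_of_mem (n / q) (Finset.mem_range.mpr ha₀) (fun a ha hne => by
        rw [hterm]
        by_cases h1 : q * a ≤ n
        · rw [if_pos h1, hgc, if_neg]
          intro h2
          apply hne
          have h6 : a * q = q * a := by ring
          have h7 : (a + 1) * q = q * a + q := by ring
          exact (Nat.div_eq_of_lt_le (by omega) (by omega)).symm
        · rw [if_neg h1])]
      rw [hterm, if_pos (by omega), hgc, if_pos (by omega)]
      congr 1
      omega
    · rw [if_neg hn]
      refine Finset.sum_eq_zero fun a ha => ?_
      rw [hterm]
      simp only [Finset.mem_range] at ha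
      by_cases h1 : q * a ≤ n
      · rw [if_pos h1, hgc, if_neg]
        have h3 : q * a ≤ q * (p - 1) := Nat.mul_le_mul_left q (by omega)
        have hp' : p - 1 + 1 = p := by omega
        have h4 : q * p = q * (p - 1) + q := by
          conv_lhs => rw [← hp']
          rw [mul_add, mul_one]
        have h5 : p * q = q * p := mul_comm p q
        rw [hMq] at hn
        omega
      · rw [if_neg h1]
  set u : Polynomial ℤ := w - Φ * g with hu
  have huc : ∀ n, u.coeff n = w.coeff n - (if n < M then w.coeff (n % q + (p - 1) * q) else 0) := by
    intro n
    rw [hu, coeff_sub, hΦg]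
  have htot : (p ^ s).totient = q * (p - 1) := Nat.totient_prime_pow hp (by omega)
  have hp2 : (2 : ℤ) ≤ (p : ℤ) := by exact_mod_cast hp.two_le
  refine ⟨u, ?_, ?_, ?_⟩
  · -- degree
    rw [degree_lt_iff_coeff_zero]
    intro nn hnn
    rw [htot] at hnn
    rw [huc]
    by_cases hnM : nn < M
    · rw [if_pos hnM]
      have hnq : nn / q = p - 1 := by
        refine Nat.div_eq_of_lt_le (by rw [mul_comm]; omega) ?_
        have hp' : p - 1 + 1 = p := by omega
        rw [hp']
        rw [hMq] at hnM
        exact hnM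
      have hdm := Nat.div_add_mod nn q
      rw [hnq] at hdm
      have hcm : q * (p - 1) = (p - 1) * q := mul_comm _ _
      have : nn % q + (p - 1) * q = nn := by omega
      rw [this, sub_self]
    · rw [if_neg hnM, hwhi nn (by omega), sub_zero]
  · -- divisibility
    have key : Φ ∣ (X ^ i - X ^ j) * w - C (p : ℤ) := by
      rw [← Ideal.mem_span_singleton (y := Φ)]
      rw [← Ideal.Quotient.eq_zero_iff_mem]
      set R := Polynomial ℤ ⧸ Ideal.span {Φ} with hR
      set π : Polynomial ℤ →+* R := Ideal.Quotient.mk (Ideal.span {Φ}) with hπ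
      set y : R := π X with hy
      set z : R := y ^ k with hz
      have hΦ0 : π Φ = 0 := Ideal.Quotient.eq_zero_iff_mem.mpr (Ideal.mem_span_singleton_self Φ)
      have hyM : y ^ M = 1 := by
        have hdvd : Φ ∣ X ^ M - 1 := hΦ ▸ cyclotomic.dvd_X_pow_sub_one M ℤ
        have h0 : π (X ^ M - 1) = 0 := by
          rw [Ideal.Quotient.eq_zero_iff_mem, Ideal.mem_span_singleton]
          exact hdvd
        rw [map_sub, map_pow, map_one] at h0
        exact eq_of_sub_eq_zero h0
      have hyq : (y ^ q) ^ p = 1 := by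
        rw [← pow_mul]
        have hqp : q * p = M := by rw [hMq]; ring
        rw [hqp, hyM]
      have hCcast : ∀ a : ℤ, π (C a) = (a : R) := by
        intro a
        simp
      have hgeom0 : ∑ a ∈ range p, (y ^ q) ^ a = 0 := by
        have h := congrArg π hΦgeom
        rw [hΦ0, map_sum] at h
        simp only [map_pow] at h
        exact h.symm
      have hIco : ∑ b ∈ Ico 1 p, (y ^ q) ^ b = -1 := by
        have hins : range p = insert 0 (Ico 1 p) := by
          ext a
          simp only [Finset.mem_range, Finset.mem_insert, Finset.mem_Ico]
          omega
        rw [hins, Finset.sum_insert (by simp)] at hgeom0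
        simp only [pow_zero] at hgeom0
        exact eq_neg_of_add_eq_zero_right hgeom0
      -- key per-term identity
      have hA1 : ∀ r : ℕ, (y ^ i - y ^ j) * y ^ e r = (z - 1) * z ^ r := by
        intro r
        have h1 : y ^ e r = y ^ (M - j + r * k) := (pow_eq_pow_mod _ hyM).symm
        have h2 : i + (M - j + r * k) = M + (r * k + k) := by omega
        have h3 : j + (M - j + r * k) = M + r * k := by omega
        have h4 : y ^ (M + (r * k + k)) = z ^ r * z := by
          rw [pow_add, hyM, one_mul, pow_add, mul_comm r k, pow_mul]
        have h5 : y ^ (M + r * k) = z ^ r := by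
          rw [pow_add, hyM, one_mul, mul_comm r k, pow_mul]
        rw [h1, sub_mul, ← pow_add, ← pow_add, h2, h3, h4, h5]
        ring
      have hA2 : π ((X ^ i - X ^ j) * w) =
          (z - 1) * ∑ r ∈ range N, (-(c r : ℤ) : ℤ) • z ^ r := by
        rw [map_mul, hw, map_sum]
        simp only [map_mul, map_pow, map_sub]
        rw [Finset.mul_sum, Finset.mul_sum]
        refine Finset.sum_congr rfl fun r _ => ?_
        rw [hCcast]
        have := hA1 r
        rw [zsmul_eq_mul]
        calc (y ^ i - y ^ j) * ((↑(-(c r : ℤ)) : R) * y ^ e r)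
            = (↑(-(c r : ℤ)) : R) * ((y ^ i - y ^ j) * y ^ e r) := by ring
          _ = (↑(-(c r : ℤ)) : R) * ((z - 1) * z ^ r) := by rw [hA1 r]
          _ = (z - 1) * ((-(c r : ℤ) : ℤ) * z ^ r) := by push_cast; ring
      have hT : ∑ r ∈ range N, (-(c r : ℤ) : ℤ) • z ^ r =
          -∑ d ∈ Ico 1 p, ∑ r ∈ range (d * P), z ^ r := by
        have hcast : ∀ r, ((c r : ℤ) : R) = ∑ d ∈ Ico 1 p, if r < d * P then (1 : R) else 0 := by
          intro r
          rw [hc]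
          push_cast
          exact Finset.natCast_card_filter _ _
        calc ∑ r ∈ range N, (-(c r : ℤ) : ℤ) • z ^ r
            = -∑ r ∈ range N, ((c r : ℤ) : R) * z ^ r := by
              rw [← Finset.sum_neg_distrib]
              refine Finset.sum_congr rfl fun r _ => ?_
              rw [zsmul_eq_mul]
              push_cast
              ring
          _ = -∑ r ∈ range N, ∑ d ∈ Ico 1 p, (if r < d * P then z ^ r else 0) := by
              congr 1
              refine Finset.sum_congr rfl fun r _ => ?_
              rw [hcast r, Finset.sum_mul]
              refine Finset.sum_congr rfl fun d _ => ?_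
              split <;> simp
          _ = -∑ d ∈ Ico 1 p, ∑ r ∈ range N, (if r < d * P then z ^ r else 0) := by
              rw [Finset.sum_comm]
          _ = -∑ d ∈ Ico 1 p, ∑ r ∈ range (d * P), z ^ r := by
              congr 1
              refine Finset.sum_congr rfl fun d hd => ?_
              simp only [Finset.mem_Ico] at hd
              have hdP : d * P ≤ N := by
                have h1 : d * P ≤ p * P := Nat.mul_le_mul_right P (by omega)
                have h2 : p * P = P * p := mul_comm _ _
                omega
              rw [← Finset.sum_filter]
              congr 1
              ext r
              simp only [Finset.mem_filter, Finset.mem_range]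
              omega
      have hzdP : ∀ d, z ^ (d * P) = (y ^ q) ^ (d * m % p) := by
        intro d
        have h1 : z ^ (d * P) = y ^ (k * (d * P)) := by rw [hz, ← pow_mul]
        have h2 : k * (d * P) = (d * m) * q := by rw [← hkm, ← hqP]; ring
        rw [h1, h2, mul_comm (d * m) q, pow_mul]
        exact pow_eq_pow_mod _ hyq
      have hcop : Nat.gcd p m = 1 := (Nat.Prime.coprime_iff_not_dvd hp).mpr hpm
      have hinj2 : ∀ d1 ∈ Ico 1 p, ∀ d2 ∈ Ico 1 p, d1 * m % p = d2 * m % p → d1 = d2 := by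
        intro d1 h1 d2 h2 hmod
        simp only [Finset.mem_Ico] at h1 h2
        have hme : d1 * m ≡ d2 * m [MOD p] := hmod
        have hde : d1 ≡ d2 [MOD p] := Nat.ModEq.cancel_right_of_coprime hcop hme
        rwa [Nat.ModEq, Nat.mod_eq_of_lt h1.2, Nat.mod_eq_of_lt h2.2] at hde
      have himg : (Ico 1 p).image (fun d => d * m % p) = Ico 1 p := by
        apply Finset.eq_of_subset_of_card_le
        · intro b hb
          simp only [Finset.mem_image, Finset.mem_Ico] at hb ⊢
          obtain ⟨d, ⟨hd1, hd2⟩, rfl⟩ := hb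
          refine ⟨?_, Nat.mod_lt _ (by omega)⟩
          rcases Nat.eq_zero_or_pos (d * m % p) with h0 | h0
          · exfalso
            have hdvd : p ∣ d * m := Nat.dvd_of_mod_eq_zero h0
            rcases (Nat.Prime.dvd_mul hp).mp hdvd with h | h
            · exact absurd (Nat.le_of_dvd (by omega) h) (by omega)
            · exact hpm h
          · omega
        · rw [Finset.card_image_of_injOn fun d1 h1 d2 h2 => hinj2 d1 h1 d2 h2]
      have hre : ∑ d ∈ Ico 1 p, (y ^ q) ^ (d * m % p) = -1 := by
        rw [← hIco]
        conv_rhs => rw [← himg]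
        rw [Finset.sum_image hinj2]
      have hB : (z - 1) * ∑ r ∈ range N, (-(c r : ℤ) : ℤ) • z ^ r = (p : R) := by
        rw [hT]
        have hneg : (z - 1) * -∑ d ∈ Ico 1 p, ∑ r ∈ range (d * P), z ^ r
            = -∑ d ∈ Ico 1 p, (z - 1) * ∑ r ∈ range (d * P), z ^ r := by
          calc (z - 1) * -∑ d ∈ Ico 1 p, ∑ r ∈ range (d * P), z ^ r
              = -((z - 1) * ∑ d ∈ Ico 1 p, ∑ r ∈ range (d * P), z ^ r) := by ring
            _ = -∑ d ∈ Ico 1 p, (z - 1) * ∑ r ∈ range (d * P), z ^ r := by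
                rw [Finset.mul_sum]
        rw [hneg]
        have hstep : ∀ d ∈ Ico 1 p, (z - 1) * ∑ r ∈ range (d * P), z ^ r = z ^ (d * P) - 1 := by
          intro d _
          rw [mul_comm]
          exact geom_sum_mul z (d * P)
        rw [Finset.sum_congr rfl hstep]
        rw [Finset.sum_sub_distrib]
        rw [Finset.sum_congr rfl fun d _ => hzdP d]
        rw [hre, Finset.sum_const, Nat.card_Ico, nsmul_eq_mul, mul_one]
        have hpc : ((p - 1 : ℕ) : R) = (p : R) - 1 := by
          push_cast [Nat.cast_sub hp1.le]
          ring
        rw [hpc]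
        ring
      have hCp : π (C (p : ℤ)) = (p : R) := by
        rw [hCcast]
        push_cast
        rfl
      rw [map_sub, hA2, hCp, hB, sub_self]
    have hdecomp : (X ^ i - X ^ j) * u - C (p : ℤ) =
        ((X ^ i - X ^ j) * w - C (p : ℤ)) - Φ * ((X ^ i - X ^ j) * g) := by
      rw [hu]; ring
    rw [hdecomp]
    exact dvd_sub key (Dvd.intro _ rfl)
  · -- coefficient bound
    intro n
    rw [huc]
    by_cases hnM : n < M
    · rw [if_pos hnM, abs_le]
      constructor
      · have h1 := hwlb n
        have h2 := hwle (n % q + (p - 1) * q)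
        omega
      · have h1 := hwle n
        have h2 := hwlb (n % q + (p - 1) * q)
        omega
    · rw [if_neg hnM, sub_zero, hwhi n (by omega), abs_zero]
      omega
end

section
/- Let p < q be primes and 0 ≤ k ≤ p - 1. Then x^{φ(pq)+k} reduced modulo Φ_{pq}(x) equals x^{φ(pq)+k} - Φ_{pq}(x) · (Σ_{i=0}^{k} x^i), and moreover this remainder polynomial has all coefficients in {-1, 0, 1}. -/
set_option maxHeartbeats 1000000


open Polynomial Finset

private lemma S_add' (a b : ℕ) :
    (∑ i ∈ range (a + b), (X : ℤ[X]) ^ i) =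
      (∑ i ∈ range a, X ^ i) + X ^ a * ∑ i ∈ range b, X ^ i := by
  rw [Finset.mul_sum, ← Finset.sum_range_add_sum_Ico _ (Nat.le_add_right a b)]
  congr 1
  rw [Finset.sum_Ico_eq_sum_range]
  simp [pow_add, Nat.add_sub_cancel_left]

private lemma key_eq' (p q : ℕ) (hp : p.Prime) (hq : q.Prime) (hne : p ≠ q) :
    cyclotomic (p * q) ℤ * ∑ i ∈ range p, X ^ i = ∑ j ∈ range p, (X : ℤ[X]) ^ (j * q) := by
  haveI : Fact p.Prime := ⟨hp⟩
  have hdvd : ¬ q ∣ p := fun h => hne ((Nat.prime_dvd_prime_iff_eq hq hp).mp h).symm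
  have h := cyclotomic_expand_eq_cyclotomic_mul hq hdvd ℤ
  rw [cyclotomic_prime] at h
  rw [← h, map_sum]
  refine Finset.sum_congr rfl fun i _ => ?_
  rw [map_pow, expand_X, ← pow_mul, mul_comm]

private lemma S_mul_p' (p M : ℕ) :
    (∑ i ∈ range (M * p), (X : ℤ[X]) ^ i) =
      (∑ i ∈ range p, X ^ i) * ∑ b ∈ range M, X ^ (b * p) := by
  induction M with
  | zero => simp
  | succ M ih =>
    rw [Nat.succ_mul, S_add', Finset.sum_range_succ, mul_add, ← ih]
    ring

private def repF (p q n M : ℕ) : Finset (ℕ × ℕ) :=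
  (range p ×ˢ range M).filter fun ab => n = ab.1 * q + ab.2 * p

private lemma coeff_eq_card' (p q : ℕ) (hp : p.Prime) (hq : q.Prime) (hne : p ≠ q)
    (M n : ℕ) :
    (cyclotomic (p * q) ℤ * ∑ i ∈ range (M * p), X ^ i).coeff n = ((repF p q n M).card : ℤ) := by
  rw [S_mul_p', ← mul_assoc, key_eq' p q hp hq hne, Finset.sum_mul_sum]
  have : ((repF p q n M).card : ℤ)
      = ∑ ab ∈ range p ×ˢ range M, if n = ab.1 * q + ab.2 * p then (1:ℤ) else 0 :=
    (Finset.sum_boole _ _).symm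
  rw [this, Finset.sum_product]
  simp [finset_sum_coeff, ← pow_add, coeff_X_pow]

private lemma card_le_one' (p q n M : ℕ) (hp : p.Prime) (hq : q.Prime) (hne : p ≠ q) :
    (repF p q n M).card ≤ 1 := by
  refine Finset.card_le_one.mpr ?_
  rintro ⟨a, b⟩ hab ⟨c, d⟩ hcd
  simp only [repF, Finset.mem_filter, Finset.mem_product, Finset.mem_range] at hab hcd
  obtain ⟨⟨hap, -⟩, habn⟩ := hab
  obtain ⟨⟨hcp, -⟩, hcdn⟩ := hcd
  have hpq : ¬ (p:ℤ) ∣ (q:ℤ) := by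
    rw [Int.natCast_dvd_natCast]
    exact fun h => hne ((Nat.prime_dvd_prime_iff_eq hp hq).mp h)
  have habn' : (a:ℤ) * q + b * p = n := by exact_mod_cast habn.symm
  have hcdn' : (c:ℤ) * q + d * p = n := by exact_mod_cast hcdn.symm
  have hdvd : (p:ℤ) ∣ ((a:ℤ) - c) * q := ⟨(d:ℤ) - b, by linarith [habn', hcdn']⟩
  have hac : (p:ℤ) ∣ ((a:ℤ) - c) :=
    ((Nat.prime_iff_prime_int.mp hp).dvd_mul.mp hdvd).resolve_right hpq
  have hac0 : (a:ℤ) - c = 0 := by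
    refine Int.eq_zero_of_abs_lt_dvd hac ?_
    rw [abs_lt]
    constructor <;> [push_cast; push_cast] <;> omega
  have hacn : a = c := by exact_mod_cast sub_eq_zero.mp hac0
  subst hacn
  have hbd : (b:ℤ) * p = d * p := by linarith [habn', hcdn']
  have : (b:ℤ) = d := by
    have hp0 : (p:ℤ) ≠ 0 := by exact_mod_cast hp.pos.ne'
    exact mul_right_cancel₀ hp0 hbd
  have : b = d := by exact_mod_cast this
  simp [this]

private noncomputable def Tc (p q n : ℕ) : ℤ :=
  (cyclotomic (p * q) ℤ * ∑ i ∈ range (n + 1), X ^ i).coeff n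

private lemma coeff_mul_S' (p q n m : ℕ) (h : n < m) :
    (cyclotomic (p * q) ℤ * ∑ i ∈ range m, X ^ i).coeff n = Tc p q n := by
  obtain ⟨b, rfl⟩ : ∃ b, m = (n + 1) + b := ⟨m - (n + 1), by omega⟩
  rw [S_add', mul_add, coeff_add, Tc]
  have h2 : cyclotomic (p * q) ℤ * (X ^ (n + 1) * ∑ i ∈ range b, X ^ i)
      = (cyclotomic (p * q) ℤ * ∑ i ∈ range b, X ^ i) * X ^ (n + 1) := by ring
  rw [h2, coeff_mul_X_pow']
  simp

private lemma Tc_eq_card (p q n : ℕ) (hp : p.Prime) (hq : q.Prime) (hne : p ≠ q) :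
    Tc p q n = (repF p q n (n + 1)).card := by
  have h1 : n < (n + 1) * p :=
    lt_of_lt_of_le (Nat.lt_succ_self n) (Nat.le_mul_of_pos_right _ hp.pos)
  rw [← coeff_mul_S' p q n ((n + 1) * p) h1, coeff_eq_card' p q hp hq hne]

private lemma Tc_nonneg (p q n : ℕ) (hp : p.Prime) (hq : q.Prime) (hne : p ≠ q) :
    0 ≤ Tc p q n := by
  rw [Tc_eq_card p q n hp hq hne]; positivity

private lemma Tc_le_one (p q n : ℕ) (hp : p.Prime) (hq : q.Prime) (hne : p ≠ q) :
    Tc p q n ≤ 1 := by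
  rw [Tc_eq_card p q n hp hq hne]
  exact_mod_cast card_le_one' p q n (n + 1) hp hq hne

private lemma Tc_eq_one (p q n : ℕ) (hp : p.Prime) (hq : q.Prime) (hne : p ≠ q)
    (h : ∃ a b, a < p ∧ a * q + b * p = n) : Tc p q n = 1 := by
  obtain ⟨a, b, hap, habn⟩ := h
  have hb : b < n + 1 := by
    have h1 : b ≤ b * p := Nat.le_mul_of_pos_right _ hp.pos
    have h2 : b * p ≤ n := habn ▸ Nat.le_add_left _ _
    omega
  have hmem : (a, b) ∈ repF p q n (n + 1) := by
    simp only [repF, Finset.mem_filter, Finset.mem_product, Finset.mem_range]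
    exact ⟨⟨hap, hb⟩, habn.symm⟩
  have h1 : 1 ≤ (repF p q n (n + 1)).card := Finset.card_pos.mpr ⟨_, hmem⟩
  have h2 := card_le_one' p q n (n + 1) hp hq hne
  rw [Tc_eq_card p q n hp hq hne]
  omega

private lemma Tc_eq_zero (p q n : ℕ) (hp : p.Prime) (hq : q.Prime) (hne : p ≠ q)
    (h : ∀ a b, a < p → a * q + b * p ≠ n) : Tc p q n = 0 := by
  rw [Tc_eq_card p q n hp hq hne]
  suffices hs : repF p q n (n + 1) = ∅ by rw [hs]; simp
  rw [Finset.eq_empty_iff_forall_notMem]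
  rintro ⟨a, b⟩ hmem
  simp only [repF, Finset.mem_filter, Finset.mem_product, Finset.mem_range] at hmem
  exact h a b hmem.1.1 hmem.2.symm

private lemma exists_a' (p q n : ℕ) (hp : p.Prime) (hq : q.Prime) (hne : p ≠ q) :
    ∃ a : ℕ, a < p ∧ (p:ℤ) ∣ ((a:ℤ) * q - n) := by
  haveI : Fact p.Prime := ⟨hp⟩
  haveI : NeZero p := ⟨hp.pos.ne'⟩
  have hq0 : (q : ZMod p) ≠ 0 := by
    rw [Ne, ZMod.natCast_eq_zero_iff]
    exact fun h => hne ((Nat.prime_dvd_prime_iff_eq hp hq).mp h)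
  refine ⟨((n : ZMod p) * (q : ZMod p)⁻¹).val, ZMod.val_lt _, ?_⟩
  rw [← ZMod.intCast_zmod_eq_zero_iff_dvd]
  push_cast
  rw [ZMod.natCast_val, ZMod.cast_id]
  rw [mul_assoc, ZMod.inv_mul_of_unit _ (Ne.isUnit hq0), mul_one, sub_self]

private lemma exists_rep_ge (p q n : ℕ) (hp : p.Prime) (hq : q.Prime) (hne : p ≠ q)
    (hpq : p < q) (hn : (p - 1) * (q - 1) ≤ n) :
    ∃ a b, a < p ∧ a * q + b * p = n := by
  obtain ⟨a, hap, c, hc⟩ := exists_a' p q n hp hq hne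
  have hp2 : 2 ≤ p := hp.two_le
  have hq2 : 2 ≤ q := hq.two_le
  have hφ : (((p - 1) * (q - 1) : ℕ) : ℤ) = ((p:ℤ) - 1) * ((q:ℤ) - 1) := by
    rw [Nat.cast_mul, Nat.cast_sub (by omega : 1 ≤ p), Nat.cast_sub (by omega : 1 ≤ q),
      Nat.cast_one]
  have hn' : ((p:ℤ) - 1) * ((q:ℤ) - 1) ≤ (n:ℤ) := by
    rw [← hφ]; exact_mod_cast hn
  have ha1 : (a:ℤ) ≤ (p:ℤ) - 1 := by push_cast; omega
  have hAle : (a:ℤ) * q ≤ ((p:ℤ) - 1) * q := by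
    have : (0:ℤ) ≤ q := by positivity
    nlinarith
  have hexp : ((p:ℤ) - 1) * q = ((p:ℤ) - 1) * ((q:ℤ) - 1) + ((p:ℤ) - 1) := by ring
  have hle : (a:ℤ) * q ≤ (n:ℤ) := by
    by_contra hlt
    push_neg at hlt
    have hc1 : 0 < (p:ℤ) * c := by linarith [hc]
    have hcpos : 1 ≤ c := by nlinarith
    have : (p:ℤ) ≤ (p:ℤ) * c := by nlinarith
    linarith [hc]
  have hc0 : c ≤ 0 := by nlinarith [hc]
  refine ⟨a, (-c).toNat, hap, ?_⟩
  have htn : ((-c).toNat : ℤ) = -c := Int.toNat_of_nonneg (by omega)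
  have : ((a * q + (-c).toNat * p : ℕ) : ℤ) = (n:ℤ) := by
    push_cast [htn]; linarith [hc]
  exact_mod_cast this

private lemma exists_rep_sub (p q d : ℕ) (hp : p.Prime) (hq : q.Prime) (hne : p ≠ q)
    (hpq : p < q) (h2d : 2 ≤ d) (hdp : d ≤ p) :
    ∃ a b, a < p ∧ a * q + b * p = (p - 1) * (q - 1) - d := by
  have hp2 : 2 ≤ p := hp.two_le
  have hq2 : 2 ≤ q := hq.two_le
  have hdφ : d ≤ (p - 1) * (q - 1) := by
    calc d ≤ p := hdp
    _ = 1 * p := (one_mul p).symm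
    _ ≤ (p - 1) * (q - 1) := Nat.mul_le_mul (by omega) (by omega)
  obtain ⟨a, hap, c, hc⟩ := exists_a' p q ((p - 1) * (q - 1) - d) hp hq hne
  have hφ : (((p - 1) * (q - 1) : ℕ) : ℤ) = ((p:ℤ) - 1) * ((q:ℤ) - 1) := by
    rw [Nat.cast_mul, Nat.cast_sub (by omega : 1 ≤ p), Nat.cast_sub (by omega : 1 ≤ q),
      Nat.cast_one]
  have hn' : (((p - 1) * (q - 1) - d : ℕ) : ℤ) = ((p:ℤ) - 1) * ((q:ℤ) - 1) - d := by
    rw [Nat.cast_sub hdφ, hφ]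
  rw [hn'] at hc
  have hqz : (p:ℤ) + 1 ≤ q := by exact_mod_cast hpq
  have hpz : (2:ℤ) ≤ p := by exact_mod_cast hp2
  have hd2 : (2:ℤ) ≤ d := by exact_mod_cast h2d
  have hdp' : (d:ℤ) ≤ p := by exact_mod_cast hdp
  have ha1 : (a:ℤ) ≤ (p:ℤ) - 1 := by
    have : (a:ℤ) < p := by exact_mod_cast hap
    linarith
  have hq0 : (0:ℤ) ≤ q := by positivity
  have hAle : (a:ℤ) * q ≤ ((p:ℤ) - 1) * q := by nlinarith
  have hexp : ((p:ℤ) - 1) * q = ((p:ℤ) - 1) * ((q:ℤ) - 1) + ((p:ℤ) - 1) := by ring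
  have hle : (a:ℤ) * q ≤ ((p:ℤ) - 1) * ((q:ℤ) - 1) - d := by
    by_contra hlt
    push_neg at hlt
    have hc1 : 0 < (p:ℤ) * c := by linarith
    have hcpos : 1 ≤ c := by nlinarith
    have hub : (p:ℤ) * c ≤ 2 * p - 1 := by linarith
    have hcle : c ≤ 1 := by nlinarith
    have hc1' : c = 1 := le_antisymm hcle hcpos
    subst hc1'
    have hAeq : (a:ℤ) * q = ((p:ℤ) - 1) * ((q:ℤ) - 1) - d + p := by linarith
    have hkey : ((p:ℤ) - 1 - a) * q = (d:ℤ) - 1 := by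
      have hr : ((p:ℤ) - 1 - a) * q = ((p:ℤ) - 1) * q - a * q := by ring
      rw [hr, hexp, hAeq]; ring
    have he0 : (0:ℤ) ≤ (p:ℤ) - 1 - a := by linarith
    rcases eq_or_lt_of_le he0 with he | he
    · rw [← he, zero_mul] at hkey; linarith
    · have h1e : 1 ≤ (p:ℤ) - 1 - a := he
      have : (q:ℤ) ≤ ((p:ℤ) - 1 - a) * q := by nlinarith
      linarith
  have hc0 : c ≤ 0 := by nlinarith
  refine ⟨a, (-c).toNat, hap, ?_⟩
  have htn : ((-c).toNat : ℤ) = -c := Int.toNat_of_nonneg (by omega)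
  have hfin : ((a * q + (-c).toNat * p : ℕ) : ℤ) = (((p - 1) * (q - 1) - d : ℕ) : ℤ) := by
    push_cast [htn]
    rw [hn']
    linarith
  exact_mod_cast hfin

private lemma no_rep' (p q : ℕ) (hp : p.Prime) (hq : q.Prime) (hne : p ≠ q) :
    ∀ a b, a < p → a * q + b * p ≠ (p - 1) * (q - 1) - 1 := by
  intro a b hap h
  have hp2 : 2 ≤ p := hp.two_le
  have hq2 : 2 ≤ q := hq.two_le
  have hφ1 : 1 ≤ (p - 1) * (q - 1) := Nat.mul_pos (by omega) (by omega)
  have hφ : (((p - 1) * (q - 1) : ℕ) : ℤ) = ((p:ℤ) - 1) * ((q:ℤ) - 1) := by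
    rw [Nat.cast_mul, Nat.cast_sub (by omega : 1 ≤ p), Nat.cast_sub (by omega : 1 ≤ q),
      Nat.cast_one]
  have hcast : (a:ℤ) * q + b * p = ((p:ℤ) - 1) * ((q:ℤ) - 1) - 1 := by
    have h' := congrArg (Nat.cast : ℕ → ℤ) h
    rw [Nat.cast_sub hφ1, hφ, Nat.cast_one] at h'
    push_cast at h'
    linarith [h']
  have h2 : ((a:ℤ) + 1) * q + ((b:ℤ) + 1) * p = (p:ℤ) * q := by linear_combination hcast
  have hdvd : (p:ℤ) ∣ ((a:ℤ) + 1) * q := ⟨(q:ℤ) - (b + 1), by linear_combination h2⟩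
  have hpq : ¬ (p:ℤ) ∣ (q:ℤ) := by
    rw [Int.natCast_dvd_natCast]
    exact fun hh => hne ((Nat.prime_dvd_prime_iff_eq hp hq).mp hh)
  have ha1 : (p:ℤ) ∣ ((a:ℤ) + 1) :=
    ((Nat.prime_iff_prime_int.mp hp).dvd_mul.mp hdvd).resolve_right hpq
  have hple : (p:ℤ) ≤ (a:ℤ) + 1 := Int.le_of_dvd (by positivity) ha1
  have hap' : (a:ℤ) + 1 ≤ p := by push_cast; omega
  have hae : (a:ℤ) + 1 = p := le_antisymm hap' hple
  rw [hae] at h2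
  have hb : ((b:ℤ) + 1) * p = 0 := by linarith
  have hbpos : (0:ℤ) < ((b:ℤ) + 1) * p := by positivity
  linarith

private lemma coeff_formula (p q k n : ℕ) (h : k < n) :
    (cyclotomic (p * q) ℤ * ∑ i ∈ range (k + 1), X ^ i).coeff n
      = Tc p q n - Tc p q (n - (k + 1)) := by
  have hsplit : n + 1 = (k + 1) + (n - k) := by omega
  have hS : (∑ i ∈ range (n + 1), (X:ℤ[X]) ^ i)
      = (∑ i ∈ range (k + 1), X ^ i) + X ^ (k + 1) * ∑ i ∈ range (n - k), X ^ i := by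
    rw [hsplit, S_add']
  have hT : Tc p q n = (cyclotomic (p * q) ℤ * ∑ i ∈ range (k + 1), X ^ i).coeff n
      + Tc p q (n - (k + 1)) := by
    rw [Tc, hS, mul_add, coeff_add]
    congr 1
    have h2 : cyclotomic (p * q) ℤ * (X ^ (k + 1) * ∑ i ∈ range (n - k), X ^ i)
        = (cyclotomic (p * q) ℤ * ∑ i ∈ range (n - k), X ^ i) * X ^ (k + 1) := by ring
    rw [h2, coeff_mul_X_pow', if_pos (by omega : k + 1 ≤ n)]
    exact coeff_mul_S' p q (n - (k + 1)) (n - k) (by omega)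
  linarith [hT]

theorem modByMonic_pow_totient_add (p q k : ℕ) (hp : p.Prime) (hq : q.Prime)
    (hpq : p < q) (hk : k ≤ p - 1) :
    X ^ (Nat.totient (p * q) + k) %ₘ cyclotomic (p * q) ℤ =
      X ^ (Nat.totient (p * q) + k) -
        cyclotomic (p * q) ℤ * ∑ i ∈ Finset.range (k + 1), X ^ i ∧
    ∀ n, |(X ^ (Nat.totient (p * q) + k) %ₘ cyclotomic (p * q) ℤ).coeff n| ≤ 1 := by
  have hne : p ≠ q := hpq.ne
  have hp2 : 2 ≤ p := hp.two_le
  have hq2 : 2 ≤ q := hq.two_le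
  have hφ : Nat.totient (p * q) = (p - 1) * (q - 1) := by
    rw [Nat.totient_mul ((Nat.coprime_primes hp hq).mpr hne), Nat.totient_prime hp,
      Nat.totient_prime hq]
  set φ : ℕ := (p - 1) * (q - 1) with hφdef
  have hφk : k < φ := by
    have h1 : 1 ≤ p - 1 := by omega
    have h2 : 2 ≤ q - 1 := by omega
    have : (p - 1) * 2 ≤ (p - 1) * (q - 1) := Nat.mul_le_mul_left _ h2
    omega
  set Φ : ℤ[X] := cyclotomic (p * q) ℤ with hΦ
  set r : ℤ[X] := X ^ (φ + k) - Φ * ∑ i ∈ Finset.range (k + 1), X ^ i with hr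
  -- coefficients of r vanish in degrees ≥ φ
  have hT1 : ∀ n, φ ≤ n → Tc p q n = 1 := fun n hn =>
    Tc_eq_one p q n hp hq hne (exists_rep_ge p q n hp hq hne hpq hn)
  have hT0 : Tc p q (φ - 1) = 0 := Tc_eq_zero p q (φ - 1) hp hq hne (no_rep' p q hp hq hne)
  have hTd : ∀ d, 2 ≤ d → d ≤ p → Tc p q (φ - d) = 1 := fun d h2 hdp =>
    Tc_eq_one p q (φ - d) hp hq hne (exists_rep_sub p q d hp hq hne hpq h2 hdp)
  have hrc : ∀ n, φ ≤ n → r.coeff n = 0 := by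
    intro n hn
    have hkn : k < n := lt_of_lt_of_le hφk hn
    rw [hr, coeff_sub, coeff_X_pow, coeff_formula p q k n hkn]
    have hTn : Tc p q n = 1 := hT1 n hn
    rcases lt_trichotomy n (φ + k) with hlt | heq | hgt
    · rw [if_neg (by omega)]
      have hd : n - (k + 1) = φ - (φ + k + 1 - n) := by omega
      have : Tc p q (n - (k + 1)) = 1 := by
        rw [hd]; exact hTd _ (by omega) (by omega)
      rw [hTn, this]; ring
    · rw [if_pos heq]
      have hd : n - (k + 1) = φ - 1 := by omega
      rw [hd, hTn, hT0]; ring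
    · rw [if_neg (by omega)]
      have : Tc p q (n - (k + 1)) = 1 := hT1 _ (by omega)
      rw [hTn, this]; ring
  have hdeg : r.degree < Φ.degree := by
    rw [hΦ, degree_cyclotomic, hφ]
    exact (degree_lt_iff_coeff_zero r φ).mpr fun m hm => hrc m hm
  have hmonic : Φ.Monic := cyclotomic.monic _ ℤ
  have hmain : X ^ (φ + k) %ₘ Φ = r := by
    have hdvd : Φ ∣ X ^ (φ + k) - r := ⟨∑ i ∈ Finset.range (k + 1), X ^ i, by rw [hr]; ring⟩
    rw [modByMonic_eq_of_dvd_sub hmonic hdvd, (modByMonic_eq_self_iff hmonic).mpr hdeg]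
  rw [hφ]
  refine ⟨hmain, ?_⟩
  intro n
  rw [hmain]
  by_cases hn : φ ≤ n
  · rw [hrc n hn]; simp
  · push_neg at hn
    have hcne : n ≠ φ + k := by omega
    rw [hr, coeff_sub, coeff_X_pow, if_neg hcne, zero_sub, abs_neg]
    by_cases hkn : k < n
    · rw [coeff_formula p q k n hkn]
      have h1 := Tc_nonneg p q n hp hq hne
      have h2 := Tc_le_one p q n hp hq hne
      have h3 := Tc_nonneg p q (n - (k + 1)) hp hq hne
      have h4 := Tc_le_one p q (n - (k + 1)) hp hq hne
      rw [abs_le]; constructor <;> linarith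
    · push_neg at hkn
      rw [coeff_mul_S' p q n (k + 1) (by omega)]
      have h1 := Tc_nonneg p q n hp hq hne
      have h2 := Tc_le_one p q n hp hq hne
      rw [abs_le]; constructor <;> linarith
end

section
/- Let p < q be primes and 0 ≤ k < p - 1. The constant coefficient of the remainder of x^{φ(pq)+k} upon division by Φ_{pq}(x) equals -1. -/
open Polynomial Finset

theorem constant_coeff_modByMonic (p q k : ℕ) (hp : p.Prime) (hq : q.Prime)
    (hpq : p < q) (hk : k < p - 1) :
    (X ^ (Nat.totient (p * q) + k) %ₘ cyclotomic (p * q) ℤ).coeff 0 = -1 := by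
  haveI := Fact.mk hp
  haveI := Fact.mk hq
  have hp2 := hp.two_le
  have hq2 := hq.two_le
  set N := p * q with hN
  set φ := Nat.totient N with hφdef
  set F := cyclotomic N ℤ with hF
  have hφ : φ = (p - 1) * (q - 1) := by
    rw [hφdef, hN, Nat.totient_mul ((Nat.coprime_primes hp hq).mpr hpq.ne),
      Nat.totient_prime hp, Nat.totient_prime hq]
  have hsum : φ + p + q = N + 1 := by
    have h1 : 1 ≤ p := hp.one_lt.le
    have h2 : 1 ≤ q := hq.one_lt.le
    rw [hφ, hN]
    zify [h1, h2]
    ring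
  have hφge : p ≤ φ := by
    have h := Nat.mul_le_mul_left (p - 1) (show 2 ≤ q - 1 by omega)
    rw [← hφ] at h
    omega
  have hkp : k + 2 ≤ p := by omega
  have hdeg : F.natDegree = φ := by rw [hF, natDegree_cyclotomic]
  have hFdeg : F.degree = (φ : ℕ) := by
    rw [hF, degree_cyclotomic]
  have hlead : F.coeff φ = 1 := by
    rw [← hdeg]; exact (cyclotomic.monic N ℤ).coeff_natDegree
  have hpdq : ¬ p ∣ q := fun h => absurd ((Nat.prime_dvd_prime_iff_eq hp hq).mp h) hpq.ne
  -- the key polynomial identity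
  have h1 : F * cyclotomic q ℤ * (X ^ p - 1) = X ^ N - 1 := by
    have h2 := congrArg (expand ℤ p) (cyclotomic_prime_mul_X_sub_one ℤ q)
    simp only [map_mul, map_sub, map_pow, expand_X, map_one,
      cyclotomic_expand_eq_cyclotomic_mul hp hpdq] at h2
    rw [mul_comm q p, ← pow_mul] at h2
    rw [hF, hN]
    exact h2
  have hid : F * ((X ^ q - 1) * (X ^ p - 1)) = (X ^ N - 1) * (X - 1) := by
    rw [← cyclotomic_prime_mul_X_sub_one ℤ q, ← h1]; ring
  have hid2 : F * X ^ (q + p) - F * X ^ q - F * X ^ p + F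
      = X ^ (N + 1) - X ^ N - X ^ 1 + 1 := by
    linear_combination hid
  -- high coefficients of F
  have key : ∀ d : ℕ, d + 1 ≤ φ → φ + 1 ≤ d + p →
      F.coeff d = if d + 1 = φ then -1 else 0 := by
    intro d hd1 hd2
    have hc := congrArg (fun f : ℤ[X] => f.coeff (d + (q + p))) hid2
    simp only [coeff_add, coeff_sub] at hc
    have e1 : (F * X ^ (q + p)).coeff (d + (q + p)) = F.coeff d := coeff_mul_X_pow _ _ _
    have e2 : (F * X ^ q).coeff (d + (q + p)) = F.coeff (d + p) := by
      rw [show d + (q + p) = (d + p) + q by ring, coeff_mul_X_pow]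
    have e3 : (F * X ^ p).coeff (d + (q + p)) = F.coeff (d + q) := by
      rw [show d + (q + p) = (d + q) + p by ring, coeff_mul_X_pow]
    have z2 : F.coeff (d + p) = 0 := coeff_eq_zero_of_natDegree_lt (by rw [hdeg]; omega)
    have z3 : F.coeff (d + q) = 0 := coeff_eq_zero_of_natDegree_lt (by rw [hdeg]; omega)
    have z4 : F.coeff (d + (q + p)) = 0 := coeff_eq_zero_of_natDegree_lt (by rw [hdeg]; omega)
    have r1 : (X ^ (N + 1) : ℤ[X]).coeff (d + (q + p)) = 0 := by
      rw [coeff_X_pow, if_neg (by omega)]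
    have r2 : (X ^ N : ℤ[X]).coeff (d + (q + p)) = if d + 1 = φ then 1 else 0 := by
      rw [coeff_X_pow]
      rcases eq_or_ne (d + 1) φ with h | h
      · rw [if_pos (by omega), if_pos h]
      · rw [if_neg (by omega), if_neg h]
    have r3 : (X ^ 1 : ℤ[X]).coeff (d + (q + p)) = 0 := by
      rw [coeff_X_pow, if_neg (by omega)]
    have r4 : (1 : ℤ[X]).coeff (d + (q + p)) = 0 := by
      rw [coeff_one, if_neg (by omega)]
    rw [e1, e2, e3, z2, z3, z4, r1, r2, r3, r4] at hc
    split_ifs at hc ⊢ <;> linarith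
  -- the quotient
  set Q : ℤ[X] := ∑ i ∈ range (k + 1), X ^ i with hQ
  set r : ℤ[X] := X ^ (φ + k) - F * Q with hr
  have hcoeffFQ : ∀ m : ℕ, φ ≤ m → (F * Q).coeff m = if m = φ + k then 1 else 0 := by
    intro m hm
    rw [hQ, Finset.mul_sum, finset_sum_coeff]
    have step : ∀ i ∈ range (k + 1), (F * X ^ i).coeff m
        = (if i = m - φ then (1 : ℤ) else 0) + (if i = m - φ + 1 then (-1 : ℤ) else 0) := by
      intro i hi
      simp only [mem_range] at hi
      have him : i ≤ m := by omega
      conv_lhs => rw [show m = (m - i) + i by omega, coeff_mul_X_pow]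
      by_cases h1 : i < m - φ
      · rw [coeff_eq_zero_of_natDegree_lt (by rw [hdeg]; omega), if_neg (by omega),
          if_neg (by omega)]
        norm_num
      · by_cases h2 : i = m - φ
        · rw [show m - i = φ by omega, hlead, if_pos h2, if_neg (by omega)]
          norm_num
        · rw [key (m - i) (by omega) (by omega)]
          rcases eq_or_ne i (m - φ + 1) with h3 | h3
          · rw [if_pos (by omega), if_neg (by omega), if_pos h3]
            norm_num
          · rw [if_neg (by omega), if_neg h2, if_neg h3]
            norm_num
    rw [Finset.sum_congr rfl step, Finset.sum_add_distrib,
      Finset.sum_ite_eq' (range (k + 1)) (m - φ) (fun _ => (1 : ℤ)),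
      Finset.sum_ite_eq' (range (k + 1)) (m - φ + 1) (fun _ => (-1 : ℤ))]
    by_cases hmk : m = φ + k
    · rw [if_pos (mem_range.mpr (by omega)),
        if_neg (fun h => by rw [mem_range] at h; omega), if_pos hmk]
      norm_num
    · by_cases hmk2 : m < φ + k
      · rw [if_pos (mem_range.mpr (by omega)), if_pos (mem_range.mpr (by omega)), if_neg hmk]
        norm_num
      · rw [if_neg (fun h => by rw [mem_range] at h; omega),
          if_neg (fun h => by rw [mem_range] at h; omega), if_neg hmk]
        norm_num
  have hdegr : r.degree < F.degree := by
    rw [hFdeg, degree_lt_iff_coeff_zero]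
    intro m hm
    have hm' : φ ≤ m := by exact_mod_cast hm
    rw [hr, coeff_sub, coeff_X_pow, hcoeffFQ m hm']
    split_ifs <;> ring
  have hmod : X ^ (φ + k) %ₘ F = r :=
    (div_modByMonic_unique Q r (cyclotomic.monic N ℤ) ⟨by rw [hr]; ring, hdegr⟩).2
  rw [hmod, hr, coeff_sub, mul_coeff_zero, coeff_X_pow, if_neg (by omega),
    show F.coeff 0 = 1 from cyclotomic_coeff_zero ℤ (by rw [hN]; nlinarith),
    show Q.coeff 0 = 1 from ?_]
  · norm_num
  · rw [hQ, finset_sum_coeff]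
    simp [coeff_X_pow]
end

section
/- Let p < q be primes and 0 ≤ k < p - 1. The coefficient of x^{φ(pq)-1} in the remainder of x^{φ(pq)+k} upon division by Φ_{pq}(x) equals 1. -/
open Polynomial Finset

theorem cyclo_pq_identity (p q : ℕ) (hp : p.Prime) (hq : q.Prime) (hpq : p ≠ q) :
    cyclotomic (p * q) ℤ * ((X ^ p - 1) * (X ^ q - 1)) = (X ^ (p * q) - 1) * (X - 1) := by
  haveI : Fact q.Prime := ⟨hq⟩
  have hdiv : ¬ p ∣ q := fun h => hpq ((Nat.prime_dvd_prime_iff_eq hp hq).mp h)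
  have h1 : expand ℤ p (cyclotomic q ℤ) = cyclotomic (q * p) ℤ * cyclotomic q ℤ :=
    cyclotomic_expand_eq_cyclotomic_mul hp hdiv ℤ
  have h2 : cyclotomic q ℤ * (X - 1) = X ^ q - 1 := cyclotomic_prime_mul_X_sub_one ℤ q
  have h3 : expand ℤ p (cyclotomic q ℤ) * (X ^ p - 1) = X ^ (p * q) - 1 := by
    have : expand ℤ p (cyclotomic q ℤ) * (X ^ p - 1)
        = expand ℤ p (cyclotomic q ℤ * (X - 1)) := by
      rw [map_mul, map_sub, expand_X, map_one]
    rw [this, h2, map_sub, map_pow, expand_X, map_one, ← pow_mul, mul_comm p q]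
  rw [mul_comm q p] at h1
  linear_combination (-(cyclotomic (p*q) ℤ * (X^p - 1))) * h2 + (X - 1) * h3
    + (-((X^p - 1) * (X - 1))) * h1

theorem cyclo_pq_coeff (p q : ℕ) (hp : p.Prime) (hq : q.Prime) (hpq : p < q)
    (m : ℕ) (hm : m ≤ (p - 1) * (q - 1)) (hm2 : (p - 1) * (q - 1) ≤ m + (p - 1)) :
    (cyclotomic (p * q) ℤ).coeff m =
      if m = (p - 1) * (q - 1) then 1 else if m + 1 = (p - 1) * (q - 1) then -1 else 0 := by
  have hp2 := hp.two_le
  have hq2 := hq.two_le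
  obtain ⟨a, rfl⟩ : ∃ a, p = a + 1 := ⟨p - 1, by omega⟩
  obtain ⟨b, rfl⟩ : ∃ b, q = b + 1 := ⟨q - 1, by omega⟩
  have ha : 1 ≤ a := by omega
  have hb : a < b := by omega
  simp only [Nat.add_sub_cancel] at hm hm2 ⊢
  have hdeg : (cyclotomic ((a+1) * (b+1)) ℤ).natDegree = a * b := by
    rw [natDegree_cyclotomic, Nat.totient_mul, Nat.totient_prime hp, Nat.totient_prime hq]
    · simp
    · exact (Nat.coprime_primes hp hq).mpr (by omega)
  have hid := cyclo_pq_identity (a+1) (b+1) hp hq (by omega)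
  have hprod : (a+1) * (b+1) = a * b + a + b + 1 := by ring
  -- take the coefficient at N = m + (a+1) + (b+1)
  set N : ℕ := m + a + b + 2 with hN
  have key := congrArg (fun f : ℤ[X] => f.coeff N) hid
  have hlhs : cyclotomic ((a+1) * (b+1)) ℤ * ((X ^ (a+1) - 1) * (X ^ (b+1) - 1))
      = cyclotomic ((a+1) * (b+1)) ℤ * X ^ ((a+1) + (b+1))
        - cyclotomic ((a+1) * (b+1)) ℤ * X ^ (a+1)
        - cyclotomic ((a+1) * (b+1)) ℤ * X ^ (b+1)
        + cyclotomic ((a+1) * (b+1)) ℤ := by ring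
  have hrhs : (X ^ ((a+1) * (b+1)) - 1) * (X - 1)
      = X ^ ((a+1) * (b+1) + 1) - X ^ ((a+1) * (b+1)) - X ^ 1 + (1 : ℤ[X]) := by ring
  rw [hlhs, hrhs] at key
  simp only [coeff_sub, coeff_add, coeff_mul_X_pow', coeff_X_pow, coeff_one] at key
  -- simplify the conditions
  obtain ⟨D, hD⟩ : ∃ D, a * b = D := ⟨_, rfl⟩
  rw [hprod] at hdeg key ⊢
  rw [hD] at hdeg key hm hm2 ⊢
  have c1 : (a + 1) + (b + 1) ≤ N := by omega
  have c2 : N - ((a + 1) + (b + 1)) = m := by omega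
  have c3 : (cyclotomic (D + a + b + 1) ℤ).coeff (N - (a+1)) = 0 :=
    coeff_eq_zero_of_natDegree_lt (by rw [hdeg]; omega)
  have c4 : (cyclotomic (D + a + b + 1) ℤ).coeff (N - (b+1)) = 0 :=
    coeff_eq_zero_of_natDegree_lt (by rw [hdeg]; omega)
  have c5 : (cyclotomic (D + a + b + 1) ℤ).coeff N = 0 :=
    coeff_eq_zero_of_natDegree_lt (by rw [hdeg]; omega)
  simp only [if_pos c1, c2, if_pos (show a + 1 ≤ N by omega),
    if_pos (show b + 1 ≤ N by omega), c3, c4, c5] at key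
  have key' : (cyclotomic (D + a + b + 1) ℤ).coeff m
      = (((if N = D + a + b + 1 + 1 then (1:ℤ) else 0) - if N = D + a + b + 1 then 1 else 0)
          - if N = 1 then 1 else 0) + if N = 0 then 1 else 0 := by
    linear_combination key
  rw [key']
  clear_value N
  split_ifs <;> omega

theorem top_coeff_modByMonic (p q k : ℕ) (hp : p.Prime) (hq : q.Prime)
    (hpq : p < q) (hk : k < p - 1) :
    (X ^ (Nat.totient (p * q) + k) %ₘ cyclotomic (p * q) ℤ).coeff
      (Nat.totient (p * q) - 1) = 1 := by
  have hp2 := hp.two_le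
  have hq2 := hq.two_le
  set Φ := cyclotomic (p * q) ℤ with hΦ
  have hmonic : Φ.Monic := cyclotomic.monic _ _
  have htot : Nat.totient (p * q) = (p - 1) * (q - 1) := by
    rw [Nat.totient_mul ((Nat.coprime_primes hp hq).mpr (by omega)),
      Nat.totient_prime hp, Nat.totient_prime hq]
  have hcoeff0 := cyclo_pq_coeff p q hp hq hpq
  obtain ⟨d, hd⟩ : ∃ d, (p - 1) * (q - 1) = d := ⟨_, rfl⟩
  have hdeg : Φ.natDegree = d := by rw [hΦ, natDegree_cyclotomic, htot, hd]
  have hdlb : (p - 1) * 2 ≤ d := by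
    rw [← hd]; exact Nat.mul_le_mul_left _ (by omega)
  have hcoeff : ∀ m : ℕ, m ≤ d → d ≤ m + (p - 1) →
      Φ.coeff m = if m = d then 1 else if m + 1 = d then -1 else 0 := by
    intro m h1 h2
    rw [← hd] at h1 h2 ⊢
    exact hcoeff0 m h1 h2
  set T : ℤ[X] := ∑ j ∈ Finset.range (k + 1), X ^ j with hT
  set R : ℤ[X] := X ^ (d + k) - T * Φ with hR
  have hTΦ : ∀ m : ℕ, k ≤ m → (T * Φ).coeff m
      = ∑ j ∈ Finset.range (k + 1), Φ.coeff (m - j) := by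
    intro m hm
    rw [hT, Finset.sum_mul, finset_sum_coeff]
    refine Finset.sum_congr rfl fun j hj => ?_
    simp only [Finset.mem_range] at hj
    rw [mul_comm, coeff_mul_X_pow', if_pos (by omega)]
  have hcoeffR : ∀ m : ℕ, d ≤ m → R.coeff m = 0 := by
    intro m hm
    rw [hR, coeff_sub, coeff_X_pow, hTΦ m (by omega)]
    have hterm : ∀ j ∈ Finset.range (k + 1), Φ.coeff (m - j)
        = (if j = m - d then (1:ℤ) else 0) + (if j = m - d + 1 then -1 else 0) := by
      intro j hj
      simp only [Finset.mem_range] at hj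
      rcases le_or_gt (m - j) d with h | h
      · rw [hcoeff (m - j) h (by omega)]
        split_ifs <;> omega
      · rw [coeff_eq_zero_of_natDegree_lt (by rw [hdeg]; omega)]
        split_ifs <;> omega
    rw [Finset.sum_congr rfl hterm, Finset.sum_add_distrib, Finset.sum_ite_eq',
      Finset.sum_ite_eq']
    simp only [Finset.mem_range]
    split_ifs <;> omega
  have hmod : X ^ (d + k) %ₘ Φ = R := by
    have hdegΦ : Φ.degree = (d : ℕ) := by
      rw [degree_eq_natDegree hmonic.ne_zero, hdeg]
    have hdegR : R.degree < Φ.degree := by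
      rw [hdegΦ, Polynomial.degree_lt_iff_coeff_zero]
      intro m hm
      exact hcoeffR m (by exact_mod_cast hm)
    exact (div_modByMonic_unique T R hmonic ⟨by rw [hR]; ring, hdegR⟩).2
  rw [htot, hd, hmod, hR, coeff_sub, coeff_X_pow, hTΦ (d - 1) (by omega)]
  have hterm : ∀ j ∈ Finset.range (k + 1), Φ.coeff (d - 1 - j)
      = if j = 0 then (-1:ℤ) else 0 := by
    intro j hj
    simp only [Finset.mem_range] at hj
    rw [hcoeff (d - 1 - j) (by omega) (by omega)]
    split_ifs <;> omega
  rw [Finset.sum_congr rfl hterm, Finset.sum_ite_eq']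
  simp only [Finset.mem_range]
  rw [if_neg (by omega), if_pos (by omega)]
  norm_num
end

section
/- Let p < q be primes and p - 1 ≤ k ≤ q - 1. Then the remainder of x^{φ(pq)+k} upon division by Φ_{pq}(x) equals -x^{k-(p-1)} · Σ_{i=0}^{p-2} x^{qi}. -/
open Polynomial Finset

theorem modByMonic_middle_range (p q k : ℕ) (hp : p.Prime) (hq : q.Prime)
    (hpq : p < q) (hk1 : p - 1 ≤ k) (hk2 : k ≤ q - 1) :
    X ^ (Nat.totient (p * q) + k) %ₘ cyclotomic (p * q) ℤ =
      -(X ^ (k - (p - 1)) * ∑ i ∈ Finset.range (p - 1), X ^ (q * i)) := by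
  have hp1 : 1 ≤ p := hp.one_lt.le
  have hq1 : 1 ≤ q := hq.one_lt.le
  have hmonic : (cyclotomic (p * q) ℤ).Monic := cyclotomic.monic _ _
  have htot : Nat.totient (p * q) = (p - 1) * (q - 1) := by
    rw [Nat.totient_mul ((Nat.coprime_primes hp hq).mpr hpq.ne), Nat.totient_prime hp,
      Nat.totient_prime hq]
  have hqa : q * (p - 1) = (p - 1) * (q - 1) + (p - 1) := by
    conv_lhs => rw [show q = (q - 1) + 1 from by omega]
    rw [add_mul, one_mul, mul_comm]
  -- key divisibility: Φ_{pq} ∣ ∑_{i<p} X^{qi}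
  have hdvdS : cyclotomic (p * q) ℤ ∣ ∑ i ∈ Finset.range p, (X : ℤ[X]) ^ (q * i) := by
    have hmem : q ∈ (p * q).properDivisors := by
      rw [Nat.mem_properDivisors]
      exact ⟨dvd_mul_left q p, (lt_mul_iff_one_lt_left hq.pos).mpr hp.one_lt⟩
    have h1 := X_pow_sub_one_mul_cyclotomic_dvd_X_pow_sub_one_of_dvd ℤ hmem
    have hX : ((X : ℤ[X]) ^ q - 1) ≠ 0 := by
      have := monic_X_pow_sub_C (1 : ℤ) hq.pos.ne'
      rw [map_one] at this
      exact this.ne_zero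
    have h2 : ((X : ℤ[X]) ^ q - 1) * ∑ i ∈ Finset.range p, X ^ (q * i) =
        X ^ (p * q) - 1 := by
      simp only [pow_mul]
      rw [mul_comm ((X : ℤ[X]) ^ q - 1), geom_sum_mul, ← pow_mul, mul_comm q p, ← pow_mul]
    rw [← h2] at h1
    exact (mul_dvd_mul_iff_left hX).mp h1
  set r : ℤ[X] := -(X ^ (k - (p - 1)) * ∑ i ∈ Finset.range (p - 1), X ^ (q * i)) with hr
  have hdiff : cyclotomic (p * q) ℤ ∣ X ^ (Nat.totient (p * q) + k) - r := by
    have key : (X : ℤ[X]) ^ (Nat.totient (p * q) + k) - r =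
        X ^ (k - (p - 1)) * ∑ i ∈ Finset.range p, X ^ (q * i) := by
      rw [hr, sub_neg_eq_add]
      have hpsplit : p = (p - 1) + 1 := by omega
      rw [hpsplit, Finset.sum_range_succ, ← hpsplit, mul_add]
      have hexp : Nat.totient (p * q) + k = (k - (p - 1)) + q * (p - 1) := by
        rw [htot, hqa]; omega
      rw [hexp, pow_add, add_comm]
    rw [key]
    exact Dvd.dvd.mul_left hdvdS _
  rw [modByMonic_eq_of_dvd_sub hmonic hdiff, (modByMonic_eq_self_iff hmonic).mpr]
  have hdegc : (cyclotomic (p * q) ℤ).degree = ((p - 1) * (q - 1) : ℕ) := by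
    rw [degree_cyclotomic, htot]
  rw [hdegc, hr, degree_neg, Finset.mul_sum]
  apply lt_of_le_of_lt (degree_sum_le _ _)
  rw [Finset.sup_lt_iff (by exact_mod_cast WithBot.bot_lt_coe _)]
  intro i hi
  rw [Finset.mem_range] at hi
  rw [← pow_add, degree_X_pow]
  have h3 : q * (i + 1) ≤ q * (p - 1) := Nat.mul_le_mul_left q (by omega)
  rw [Nat.mul_add, Nat.mul_one, hqa] at h3
  have hklt : k - (p - 1) + q * i < (p - 1) * (q - 1) := by omega
  exact_mod_cast hklt
end

section
/- Let p < q be primes. Then x^{pq-q} ≡ -Σ_{i=0}^{p-2} x^{qi} (mod Φ_{pq}(x)). -/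
open Polynomial Finset

theorem pow_pq_sub_q_congr (p q : ℕ) (hp : p.Prime) (hq : q.Prime)
    (hpq : p < q) :
    cyclotomic (p * q) ℤ ∣
      (X ^ (p * q - q) + ∑ i ∈ Finset.range (p - 1), X ^ (q * i)) := by
  have : Fact p.Prime := ⟨hp⟩
  have hnd : ¬ q ∣ p := fun h => absurd (Nat.le_of_dvd hp.pos h) (not_le.mpr hpq)
  have key := cyclotomic_expand_eq_cyclotomic_mul hq hnd ℤ
  have h1 : cyclotomic (p * q) ℤ ∣ expand ℤ q (cyclotomic p ℤ) :=
    key ▸ Dvd.intro _ rfl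
  have h2 : expand ℤ q (cyclotomic p ℤ)
      = X ^ (p * q - q) + ∑ i ∈ Finset.range (p - 1), X ^ (q * i) := by
    rw [cyclotomic_prime, map_sum]
    simp only [map_pow, expand_X, ← pow_mul]
    have hs : ∑ x ∈ range p, (X : ℤ[X]) ^ (q * x)
        = ∑ x ∈ range (p - 1), X ^ (q * x) + X ^ (q * (p - 1)) := by
      conv_lhs => rw [show p = (p - 1) + 1 from (Nat.succ_pred_eq_of_pos hp.pos).symm]
      rw [Finset.sum_range_succ]
    have hq1 : q * (p - 1) = p * q - q := by
      rw [Nat.mul_sub, mul_one, mul_comm]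
    rw [hs, hq1, add_comm]
  rw [← h2]
  exact h1
end

section
/- Let p < q be primes and 0 ≤ k < pq - φ(pq). Let r(x) be the remainder of x^{φ(pq)+k} modulo Φ_{pq}(x). Then the reverse polynomial x^{φ(pq)-1} · r(1/x) is congruent to x^{pq-1-k} modulo Φ_{pq}(x); equivalently, the remainder of x^{pq-1-k} modulo Φ_{pq}(x) is the coefficient-reversal (in degree φ(pq)-1) of r(x). -/
open Polynomial

lemma natDegree_reflect_le {R : Type*} [Semiring R] {f : R[X]} {N : ℕ}
    (hf : f.natDegree ≤ N) : (f.reflect N).natDegree ≤ N := by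
  apply natDegree_le_iff_coeff_eq_zero.2
  intro i hi
  rw [coeff_reflect, revAt_eq_self_of_lt hi]
  exact coeff_eq_zero_of_natDegree_lt (lt_of_le_of_lt hf hi)

lemma reflect_cyclotomic_rat (n : ℕ) (hn : 2 ≤ n) :
    (cyclotomic n ℚ).reflect n.totient = cyclotomic n ℚ := by
  have hnpos : 0 < n := by omega
  have hζ := Complex.isPrimitiveRoot_exp n hnpos.ne'
  have hζinv := hζ.inv
  have hζ0 : (Complex.exp (2 * Real.pi * Complex.I / n)) ≠ 0 := Complex.exp_ne_zero _
  set ζ := Complex.exp (2 * Real.pi * Complex.I / n)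
  have hdeg : (cyclotomic n ℚ).natDegree = n.totient := natDegree_cyclotomic n ℚ
  have haev : aeval ζ⁻¹ ((cyclotomic n ℚ).reflect n.totient) = 0 := by
    have : Invertible ζ := invertibleOfNonzero hζ0
    have h := (eval₂_reflect_eq_zero_iff (algebraMap ℚ ℂ) ζ n.totient
      (cyclotomic n ℚ) hdeg.le).2 ?_
    · rwa [invOf_eq_inv] at h
    · have : aeval ζ (cyclotomic n ℚ) = 0 := by
        rw [aeval_def, ← eval_map, map_cyclotomic]
        exact hζ.isRoot_cyclotomic hnpos
      simpa [aeval_def] using this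
  have hmin : cyclotomic n ℚ = minpoly ℚ (ζ⁻¹ : ℂ) :=
    cyclotomic_eq_minpoly_rat hζinv hnpos
  have hdvd : cyclotomic n ℚ ∣ (cyclotomic n ℚ).reflect n.totient := by
    have := minpoly.dvd ℚ (ζ⁻¹ : ℂ) haev
    rwa [← hmin] at this
  have hmonic : ((cyclotomic n ℚ).reflect n.totient).Monic := by
    apply monic_of_natDegree_le_of_coeff_eq_one n.totient (natDegree_reflect_le hdeg.le)
    rw [coeff_reflect, revAt_le le_rfl, Nat.sub_self]
    exact cyclotomic_coeff_zero ℚ hn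
  obtain ⟨c, hc⟩ := hdvd
  have hΦm : (cyclotomic n ℚ).Monic := cyclotomic.monic n ℚ
  have hc1 : c = 1 := by
    have hcm : c.Monic := by
      have := hmonic
      rw [hc] at this
      exact hΦm.of_mul_monic_left this
    have hdc : c.natDegree = 0 := by
      have h1 : ((cyclotomic n ℚ).reflect n.totient).natDegree ≤ n.totient :=
        natDegree_reflect_le hdeg.le
      rw [hc, hΦm.natDegree_mul hcm, hdeg] at h1
      omega
    rw [eq_one_of_monic_natDegree_zero hcm hdc]
  rw [hc, hc1, mul_one]

lemma reflect_cyclotomic_int (n : ℕ) (hn : 2 ≤ n) :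
    (cyclotomic n ℤ).reflect n.totient = cyclotomic n ℤ := by
  have hinj : Function.Injective (Int.castRingHom ℚ) := Int.cast_injective
  apply map_injective (Int.castRingHom ℚ) hinj
  rw [← reflect_map, map_cyclotomic n (Int.castRingHom ℚ), reflect_cyclotomic_rat n hn]

theorem modByMonic_reflect (p q k : ℕ) (hp : p.Prime) (hq : q.Prime)
    (hpq : p < q) (hk : k < p * q - Nat.totient (p * q)) :
    X ^ (p * q - 1 - k) %ₘ cyclotomic (p * q) ℤ =
      (X ^ (Nat.totient (p * q) + k) %ₘ cyclotomic (p * q) ℤ).reflect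
        (Nat.totient (p * q) - 1) := by
  set n := p * q with hn
  set d := Nat.totient n with hd
  have hn2 : 2 ≤ n := by
    have := hp.two_le; have := hq.two_le
    calc 2 ≤ 2 * 2 := by norm_num
    _ ≤ p * q := Nat.mul_le_mul ‹2 ≤ p› ‹2 ≤ q›
  have hd1 : 1 ≤ d := Nat.totient_pos.2 (by omega)
  have hdn : d < n := Nat.totient_lt n (by omega)
  set Φ : ℤ[X] := cyclotomic n ℤ with hΦ
  have hΦm : Φ.Monic := cyclotomic.monic n ℤ
  have hΦdeg : Φ.natDegree = d := natDegree_cyclotomic n ℤ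
  set r : ℤ[X] := X ^ (d + k) %ₘ Φ with hr
  set s : ℤ[X] := X ^ (d + k) /ₘ Φ with hs
  have hdiv : (X : ℤ[X]) ^ (d + k) = Φ * s + r := by
    rw [hr, hs, eq_comm, add_comm]
    exact modByMonic_add_div _ _
  have hrdeg : r.natDegree ≤ d - 1 := by
    rcases eq_or_ne r 0 with h0 | h0
    · simp [h0]
    · have := degree_modByMonic_lt ((X : ℤ[X]) ^ (d + k)) hΦm
      rw [← hr] at this
      have : r.natDegree < Φ.natDegree := natDegree_lt_natDegree h0 this
      omega
  have hsdeg : s.natDegree ≤ k := by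
    rw [hs, natDegree_divByMonic _ hΦm, natDegree_X_pow, hΦdeg]
    omega
  -- reflect the division identity in degree d + k
  have key : (1 : ℤ[X]) = Φ * reflect k s + X ^ (k + 1) * reflect (d - 1) r := by
    have h1 : reflect (d + k) ((X : ℤ[X]) ^ (d + k)) = 1 := by
      rw [reflect_monomial, revAt_le le_rfl, Nat.sub_self, pow_zero]
    have h2 : reflect (d + k) (Φ * s) = Φ * reflect k s := by
      rw [reflect_mul Φ s hΦdeg.le hsdeg, reflect_cyclotomic_int n hn2]
    have h3 : reflect (d + k) r = X ^ (k + 1) * reflect (d - 1) r := by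
      have he : d + k = (k + 1) + (d - 1) := by omega
      have := reflect_mul (1 : ℤ[X]) r
        (F := k + 1) (G := d - 1) (by simp) hrdeg
      rw [one_mul] at this
      rw [he, this]
      congr 1
      rw [← C_1, reflect_C, C_1, one_mul]
    calc (1 : ℤ[X]) = reflect (d + k) ((X : ℤ[X]) ^ (d + k)) := h1.symm
    _ = reflect (d + k) (Φ * s + r) := by rw [hdiv]
    _ = reflect (d + k) (Φ * s) + reflect (d + k) r := reflect_add _ _ _
    _ = Φ * reflect k s + X ^ (k + 1) * reflect (d - 1) r := by rw [h2, h3]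
  have hpow : (n - 1 - k) + (k + 1) = n := by omega
  have hXn : Φ ∣ (X : ℤ[X]) ^ n - 1 := cyclotomic.dvd_X_pow_sub_one n ℤ
  have hdvd : Φ ∣ (X : ℤ[X]) ^ (n - 1 - k) - reflect (d - 1) r := by
    have key2 : (X : ℤ[X]) ^ (n - 1 - k) =
        Φ * (X ^ (n - 1 - k) * reflect k s) + X ^ n * reflect (d - 1) r := by
      calc (X : ℤ[X]) ^ (n - 1 - k) = X ^ (n - 1 - k) * 1 := (mul_one _).symm
      _ = X ^ (n - 1 - k) * (Φ * reflect k s + X ^ (k + 1) * reflect (d - 1) r) := by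
          rw [← key]
      _ = Φ * (X ^ (n - 1 - k) * reflect k s) +
            (X ^ (n - 1 - k) * X ^ (k + 1)) * reflect (d - 1) r := by ring
      _ = Φ * (X ^ (n - 1 - k) * reflect k s) + X ^ n * reflect (d - 1) r := by
          rw [← pow_add, hpow]
    have : (X : ℤ[X]) ^ (n - 1 - k) - reflect (d - 1) r =
        Φ * (X ^ (n - 1 - k) * reflect k s) + ((X : ℤ[X]) ^ n - 1) * reflect (d - 1) r := by
      linear_combination key2
    rw [this]
    exact dvd_add (Dvd.intro _ rfl) (Dvd.dvd.mul_right hXn _)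
  have hdvd2 : Φ ∣ (X : ℤ[X]) ^ (n - 1 - k) - X ^ (n - 1 - k) %ₘ Φ := by
    have := modByMonic_add_div ((X : ℤ[X]) ^ (n - 1 - k)) Φ
    exact ⟨X ^ (n - 1 - k) /ₘ Φ, by linear_combination -this⟩
  have hdvd3 : Φ ∣ X ^ (n - 1 - k) %ₘ Φ - reflect (d - 1) r := by
    have := dvd_sub hdvd hdvd2
    simpa using this
  have hdegΦ : Φ.degree = (d : WithBot ℕ) := by
    rw [hΦ, degree_cyclotomic]
  have hlt : (X ^ (n - 1 - k) %ₘ Φ - reflect (d - 1) r).degree < Φ.degree := by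
    apply lt_of_le_of_lt (degree_sub_le _ _)
    apply max_lt
    · exact degree_modByMonic_lt _ hΦm
    · calc (reflect (d - 1) r).degree ≤ ((reflect (d - 1) r).natDegree : WithBot ℕ) :=
            degree_le_natDegree
      _ ≤ ((d - 1 : ℕ) : WithBot ℕ) := by
            exact_mod_cast natDegree_reflect_le hrdeg
      _ < Φ.degree := by
            rw [hdegΦ]
            exact_mod_cast (by omega : d - 1 < d)
  have := eq_zero_of_dvd_of_degree_lt hdvd3 hlt
  have heq := sub_eq_zero.1 this
  rw [heq]
end

section
/- Let p < q be primes. For every integer k ≥ 0, the remainder of x^k upon division by Φ_{pq}(x) has all coefficients in {-1, 0, 1}. -/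
set_option maxHeartbeats 1000000
set_option linter.unusedSectionVars false

open Polynomial Finset
open scoped Classical

namespace MBP

/-- membership in the numerical semigroup generated by `p` and `q`. -/
def Rep (p q : ℕ) (m : ℤ) : Prop := ∃ s t : ℕ, m = s * p + t * q

open scoped Classical in
/-- indicator of `Rep`. -/
noncomputable def RR (p q : ℕ) (m : ℤ) : ℤ := if Rep p q m then 1 else 0

noncomputable def ff (p q : ℕ) (m : ℤ) : ℤ := RR p q m - RR p q (m - 1)

noncomputable def G (p q : ℕ) (a : ℕ) (n : ℤ) : ℤ :=
  if a + p ≤ p * q then RR p q (n - a) - RR p q (n - a - p)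
  else RR p q n - RR p q (n + p * q - a - p)

noncomputable def Sc (p q : ℕ) (k : ℕ) (n : ℤ) : ℤ :=
  G p q k n - G p q ((k + q) % (p * q)) n

noncomputable def rt (p q k : ℕ) : ℤ[X] :=
  ∑ n ∈ range ((p - 1) * (q - 1)), C (Sc p q k n) * X ^ n

section basic
variable {p q : ℕ} (hp : p.Prime) (hq : q.Prime) (hpq : p < q)

lemma RR_eq_one {m : ℤ} (h : Rep p q m) : RR p q m = 1 := if_pos h
lemma RR_eq_zero {m : ℤ} (h : ¬ Rep p q m) : RR p q m = 0 := if_neg h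
lemma RR_nonneg (m : ℤ) : 0 ≤ RR p q m := by unfold RR; split <;> norm_num
lemma RR_le_one (m : ℤ) : RR p q m ≤ 1 := by unfold RR; split <;> norm_num

lemma rep_nonneg {m : ℤ} (h : Rep p q m) : 0 ≤ m := by
  obtain ⟨s, t, rfl⟩ := h; positivity

lemma RR_neg {m : ℤ} (h : m < 0) : RR p q m = 0 :=
  RR_eq_zero fun hr => absurd (rep_nonneg hr) (by omega)

lemma rep_zero : Rep p q 0 := ⟨0, 0, by norm_num⟩

lemma rep_add_q {m : ℤ} (h : Rep p q (m - q)) : Rep p q m := by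
  obtain ⟨s, t, hst⟩ := h; exact ⟨s, t + 1, by push_cast; linarith⟩

lemma RR_sub_q_le (m : ℤ) : RR p q (m - q) ≤ RR p q m := by
  unfold RR; split
  · rw [if_pos (rep_add_q ‹_›)]
  · split <;> norm_num

include hp hq hpq in
lemma notrep_small {m : ℤ} (h0 : 0 < m) (h1 : m < p) : ¬ Rep p q m := by
  rintro ⟨s, t, rfl⟩
  have hs : (0:ℤ) ≤ (s:ℤ) := by positivity
  have ht : (0:ℤ) ≤ (t:ℤ) := by positivity
  have hpq' : (p:ℤ) < q := by exact_mod_cast hpq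
  have hp1 : (1:ℤ) ≤ p := by exact_mod_cast hp.one_le
  rcases eq_or_lt_of_le hs with hs0 | hs1
  · rcases eq_or_lt_of_le ht with ht0 | ht1
    · rw [← hs0, ← ht0] at h0; simp at h0
    · have h1t : (1:ℤ) ≤ (t:ℤ) := ht1
      nlinarith
  · have h1s : (1:ℤ) ≤ (s:ℤ) := hs1
    nlinarith

include hp hq hpq in
lemma q_not_dvd_p : ¬ (q : ℤ) ∣ (p : ℤ) := by
  intro h
  have : (q : ℕ) ∣ p := by exact_mod_cast h
  have := Nat.le_of_dvd hp.pos this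
  omega

include hp hq hpq in
lemma p_not_dvd_q : ¬ (p : ℤ) ∣ (q : ℤ) := by
  intro h
  have hd : (p : ℕ) ∣ q := by exact_mod_cast h
  rcases (hq.eq_one_or_self_of_dvd p hd) with h1 | h1
  · exact hp.one_lt.ne' h1
  · omega


include hp hq hpq in
lemma key_unique {s : ℕ} (hs : s < q) (h : Rep p q ((s:ℤ) * p - q)) : False := by
  obtain ⟨a, b, hab⟩ := h
  have hq' : Prime (q : ℤ) := Nat.prime_iff_prime_int.mp hq
  have hdvd : (q:ℤ) ∣ ((s:ℤ) - a) * p := ⟨b + 1, by linarith⟩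
  have hqp := q_not_dvd_p hp hq hpq
  have hdsa : (q:ℤ) ∣ ((s:ℤ) - a) := ((hq'.dvd_mul).mp hdvd).resolve_right hqp
  have hp0 : (0:ℤ) < p := by exact_mod_cast hp.pos
  have hq0 : (0:ℤ) < q := by exact_mod_cast hq.pos
  have hb1 : (0:ℤ) < (b + 1 : ℤ) := by positivity
  have hpos : (0:ℤ) < ((s:ℤ) - a) * p := by nlinarith
  have hsa : (0:ℤ) < (s:ℤ) - a := by nlinarith
  have hge : (q:ℤ) ≤ (s:ℤ) - a := Int.le_of_dvd hsa hdsa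
  have ha : (0:ℤ) ≤ (a:ℤ) := by positivity
  have : (q:ℤ) ≤ s := by linarith
  have : (s:ℤ) < q := by exact_mod_cast hs
  linarith

include hp hq hpq in
lemma Lchi {m : ℤ} (hm : m < (p:ℤ) * q) :
    RR p q m - RR p q (m - q) = if ∃ s : ℕ, m = (s:ℤ) * p then 1 else 0 := by
  have hp0 : (0:ℤ) < p := by exact_mod_cast hp.pos
  have hq0 : (0:ℤ) < q := by exact_mod_cast hq.pos
  by_cases hmq : Rep p q (m - q)
  · rw [RR_eq_one (rep_add_q hmq), RR_eq_one hmq, if_neg]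
    · ring
    · rintro ⟨s, rfl⟩
      have hs : s < q := by
        by_contra hc
        have : (q:ℤ) ≤ s := by exact_mod_cast not_lt.mp hc
        nlinarith
      exact key_unique hp hq hpq hs hmq
  · rw [RR_eq_zero hmq]
    by_cases hm' : Rep p q m
    · obtain ⟨s, t, hst⟩ := hm'
      rcases Nat.eq_zero_or_pos t with rfl | ht
      · rw [RR_eq_one ⟨s, 0, hst⟩, if_pos ⟨s, by rw [hst]; push_cast; ring⟩]
        ring
      · exfalso
        exact hmq ⟨s, t - 1, by rw [hst]; push_cast [Nat.cast_sub ht]; ring⟩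
    · rw [RR_eq_zero hm', if_neg]
      · ring
      · rintro ⟨s, rfl⟩
        exact hm' ⟨s, 0, by push_cast; ring⟩

include hp hq hpq in
lemma frobenius : ¬ Rep p q ((p:ℤ) * q - p - q) := by
  rintro ⟨s, t, hst⟩
  have hq' : Prime (q : ℤ) := Nat.prime_iff_prime_int.mp hq
  have hdvd : (q:ℤ) ∣ ((s:ℤ) + 1) * p := ⟨(p:ℤ) - (t + 1), by linarith⟩
  have hdsa : (q:ℤ) ∣ ((s:ℤ) + 1) :=
    ((hq'.dvd_mul).mp hdvd).resolve_right (q_not_dvd_p hp hq hpq)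
  have hp0 : (0:ℤ) < p := by exact_mod_cast hp.pos
  have hq0 : (0:ℤ) < q := by exact_mod_cast hq.pos
  have hs1 : (0:ℤ) < (s:ℤ) + 1 := by positivity
  have hge : (q:ℤ) ≤ (s:ℤ) + 1 := Int.le_of_dvd hs1 hdsa
  have ht0 : (0:ℤ) ≤ (t:ℤ) := by positivity
  nlinarith

include hp hq hpq in
lemma exists_s (m : ℤ) : ∃ s : ℕ, s < q ∧ (q:ℤ) ∣ m - s * p := by
  haveI : Fact q.Prime := ⟨hq⟩
  set x : ZMod q := (m : ZMod q) * (p : ZMod q)⁻¹ with hx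
  refine ⟨x.val, ZMod.val_lt x, ?_⟩
  have hpne : (p : ZMod q) ≠ 0 := by
    rw [Ne, ZMod.natCast_eq_zero_iff]
    intro h
    have := Nat.le_of_dvd hp.pos h
    omega
  have hxval : ((x.val : ℕ) : ZMod q) = x := ZMod.natCast_rightInverse x
  rw [← ZMod.intCast_zmod_eq_zero_iff_dvd]
  push_cast
  rw [hxval, hx, mul_assoc, inv_mul_cancel₀ hpne, mul_one, sub_self]

include hp hq hpq in
lemma rep_of_ge {m : ℤ} (h : (p:ℤ) * q - p - q < m) : Rep p q m := by
  obtain ⟨s, hs, t, ht⟩ := exists_s hp hq hpq m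
  have hp0 : (0:ℤ) < p := by exact_mod_cast hp.pos
  have hq0 : (0:ℤ) < q := by exact_mod_cast hq.pos
  have hs' : (s:ℤ) ≤ (q:ℤ) - 1 := by
    have : (s:ℤ) < q := by exact_mod_cast hs
    linarith
  have htpos : (0:ℤ) ≤ t := by nlinarith
  exact ⟨s, t.toNat, by rw [Int.toNat_of_nonneg htpos]; linarith⟩

include hp hq hpq in
lemma sym {m : ℤ} (h0 : 0 ≤ m) (h1 : m ≤ (p:ℤ) * q - p - q) :
    RR p q m + RR p q ((p:ℤ) * q - p - q - m) = 1 := by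
  have hp0 : (0:ℤ) < p := by exact_mod_cast hp.pos
  have hq0 : (0:ℤ) < q := by exact_mod_cast hq.pos
  by_cases hm : Rep p q m
  · rw [RR_eq_one hm, RR_eq_zero, add_zero]
    rintro ⟨a, b, hab⟩
    obtain ⟨s, t, hst⟩ := hm
    exact frobenius hp hq hpq ⟨s + a, t + b, by push_cast; linarith⟩
  · rw [RR_eq_zero hm, zero_add]
    obtain ⟨s, hs, t, ht⟩ := exists_s hp hq hpq m
    have hmlt : m < (s:ℤ) * p := by
      by_contra hc
      push_neg at hc
      have htpos : (0:ℤ) ≤ t := by nlinarith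
      exact hm ⟨s, t.toNat, by rw [Int.toNat_of_nonneg htpos]; linarith⟩
    have hge : (q:ℤ) ≤ (s:ℤ) * p - m := by
      refine Int.le_of_dvd (by linarith) ⟨-t, by linarith⟩
    have hs1 : 1 ≤ s := by
      rcases Nat.eq_zero_or_pos s with rfl | h
      · simp at hmlt; omega
      · exact h
    refine RR_eq_one ⟨q - 1 - s, (- t - 1).toNat, ?_⟩
    have hsq : s ≤ q - 1 := by omega
    have htval : (0:ℤ) ≤ -t - 1 := by
      have : (q:ℤ) * (-t) = (s:ℤ) * p - m := by linarith
      have hq1 : (q:ℤ) ≤ q * (-t) := by linarith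
      have : (1:ℤ) ≤ -t := by
        rcases le_or_gt 1 (-t) with h | h
        · exact h
        · exfalso; nlinarith
      linarith
    rw [Int.toNat_of_nonneg htval]
    push_cast [Nat.cast_sub hsq, Nat.cast_sub hq.one_le]
    have : (q:ℤ) * t = m - s * p := ht.symm ▸ by linarith
    linarith

lemma rep_split_q {m : ℤ} : Rep p q m ↔ (∃ s : ℕ, m = (s:ℤ) * p) ∨ Rep p q (m - q) := by
  constructor
  · rintro ⟨s, t, rfl⟩
    rcases Nat.eq_zero_or_pos t with rfl | ht
    · exact Or.inl ⟨s, by push_cast; ring⟩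
    · exact Or.inr ⟨s, t - 1, by push_cast [Nat.cast_sub ht]; ring⟩
  · rintro (⟨s, rfl⟩ | h)
    · exact ⟨s, 0, by push_cast; ring⟩
    · exact rep_add_q h

include hq in
lemma rep_iff_lt_q {m : ℤ} (h1 : m < q) : Rep p q m ↔ ∃ s : ℕ, m = (s:ℤ) * p := by
  rw [rep_split_q]
  constructor
  · rintro (h | h)
    · exact h
    · exact absurd (rep_nonneg h) (by omega)
  · exact Or.inl

include hp hq hpq in
lemma Lg {m : ℤ} (hm : m < (p:ℤ) * q) :
    RR p q m - RR p q (m - p) - RR p q (m - q) + RR p q (m - p - q) =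
      if m = 0 then 1 else 0 := by
  have hp0 : (0:ℤ) < p := by exact_mod_cast hp.pos
  have h1 := Lchi hp hq hpq hm
  have h2 := Lchi hp hq hpq (show m - (p:ℤ) < (p:ℤ) * q by linarith)
  rw [show RR p q m - RR p q (m - p) - RR p q (m - q) + RR p q (m - p - q) =
      (RR p q m - RR p q (m - q)) - (RR p q (m - p) - RR p q (m - p - q)) by ring,
    h1, h2]
  by_cases hm0 : m = 0
  · subst hm0
    rw [if_pos ⟨0, by norm_num⟩, if_pos rfl, if_neg, sub_zero]
    rintro ⟨s, hs⟩
    have : (0:ℤ) ≤ (s:ℤ) * p := by positivity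
    linarith
  · rw [if_neg hm0]
    by_cases hex : ∃ s : ℕ, m = (s:ℤ) * p
    · obtain ⟨s, rfl⟩ := hex
      have hs1 : 1 ≤ s := by
        rcases Nat.eq_zero_or_pos s with rfl | h
        · simp at hm0
        · exact h
      rw [if_pos ⟨s, rfl⟩, if_pos ⟨s - 1, by push_cast [Nat.cast_sub hs1]; ring⟩]
      ring
    · rw [if_neg hex, if_neg]
      · ring
      · rintro ⟨s, hs⟩
        exact hex ⟨s + 1, by push_cast; linarith⟩


lemma ff_neg {m : ℤ} (h : m < 0) : ff p q m = 0 := by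
  unfold ff
  rw [RR_neg h, RR_neg (by omega)]; ring

lemma ff_zero : ff p q 0 = 1 := by
  unfold ff
  rw [RR_eq_one rep_zero, RR_neg (by norm_num)]; ring

include hp hq hpq in
lemma ff_gt {m : ℤ} (h : (p:ℤ) * q - p - q + 1 < m) : ff p q m = 0 := by
  unfold ff
  rw [RR_eq_one (rep_of_ge hp hq hpq (by linarith)),
    RR_eq_one (rep_of_ge hp hq hpq (by linarith))]
  ring

include hp hq hpq in
lemma ff_D : ff p q ((p:ℤ) * q - p - q + 1) = 1 := by
  unfold ff
  rw [RR_eq_one (rep_of_ge hp hq hpq (by linarith)),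
    show (p:ℤ) * q - p - q + 1 - 1 = (p:ℤ) * q - p - q by ring,
    RR_eq_zero (frobenius hp hq hpq)]
  ring

lemma G_neg {a : ℕ} {n : ℤ} (h : n < 0) : G p q a n = 0 := by
  unfold G
  split
  · rw [RR_neg (by omega), RR_neg (by omega)]; ring
  · rename_i hc
    have : (p:ℤ) * q < (a:ℤ) + p := by exact_mod_cast (by omega : p * q < a + p)
    rw [RR_neg h, RR_neg (by omega)]; ring

include hp hq hpq in
lemma Grec {a : ℕ} {n : ℤ} (ha : a < p * q) (hn0 : 0 ≤ n)
    (hnd : n ≤ ((p:ℤ) * q - p - q + 1)) :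
    G p q ((a + 1) % (p * q)) n =
      G p q a (n - 1) + (if p * q ≤ a + p then ff p q n else 0) := by
  have hp2 : 2 ≤ p := hp.two_le
  have hq3 : 2 ≤ q := hq.two_le
  have hNpq : p + q ≤ p * q := by nlinarith
  by_cases h1 : a + 1 + p ≤ p * q
  · rw [Nat.mod_eq_of_lt (by omega), if_neg (by omega), add_zero]
    unfold G
    rw [if_pos (by omega : a + 1 + p ≤ p * q), if_pos (by omega : a + p ≤ p * q)]
    push_cast
    ring_nf
  · by_cases h2 : a + p ≤ p * q
    · -- a + p = p * q
      have hap : a + p = p * q := by omega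
      rw [Nat.mod_eq_of_lt (by omega), if_pos (by omega)]
      unfold G ff
      rw [if_neg (by omega : ¬ (a + 1 + p ≤ p * q)), if_pos (by omega : a + p ≤ p * q)]
      have haz : (a:ℤ) + p = (p:ℤ) * q := by exact_mod_cast hap
      have e1 : n + (p:ℤ) * q - (↑(a+1):ℤ) - p = n - 1 := by push_cast; linarith
      rw [e1]
      have e2 : RR p q (n - 1 - a) = 0 := RR_neg (by push_cast; linarith)
      have e3 : RR p q (n - 1 - a - p) = 0 := RR_neg (by push_cast; linarith)
      rw [e2, e3]
      ring
    · by_cases h4 : a + 1 < p * q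
      · rw [Nat.mod_eq_of_lt h4, if_pos (by omega)]
        unfold G ff
        rw [if_neg (by omega : ¬ (a + 1 + p ≤ p * q)), if_neg h2]
        have e1 : n + (p:ℤ) * q - (↑(a+1):ℤ) - p = n - 1 + (p:ℤ) * q - a - p := by
          push_cast; ring
        rw [e1]
        ring
      · -- a + 1 = p * q
        have hap : a + 1 = p * q := by omega
        rw [hap, Nat.mod_self, if_pos (by omega)]
        unfold G ff
        rw [if_pos (by omega : 0 + p ≤ p * q), if_neg h2]
        have haz : (a:ℤ) = (p:ℤ) * q - 1 := by
          have h5 : ((a:ℤ)+1) = ((p:ℤ) * q) := by exact_mod_cast hap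
          linarith
        have e1 : n - 1 + (p:ℤ) * q - a - p = n - p := by rw [haz]; ring
        rw [e1]
        push_cast
        ring

include hp hq in
lemma pq_facts : 2 ≤ p ∧ 2 ≤ q ∧ p + q ≤ p * q ∧ q ≤ p * q := by
  have hp2 := hp.two_le
  have hq2 := hq.two_le
  refine ⟨hp2, hq2, by nlinarith, by nlinarith⟩

include hp hq in
lemma ScA {k : ℕ} (hk : k + p + q ≤ p * q) (n : ℤ) :
    Sc p q k n = RR p q (n - k) - RR p q (n - k - p) -
      RR p q (n - k - q) + RR p q (n - k - p - q) := by
  obtain ⟨hp2, hq2, hpq', hqN⟩ := pq_facts hp hq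
  unfold Sc G
  rw [Nat.mod_eq_of_lt (by omega), if_pos (by omega), if_pos (by omega)]
  push_cast
  ring_nf

include hp hq hpq in
lemma ScB {k : ℕ} (hk1 : k + q < p * q) (hk2 : p * q < k + p + q) (n : ℤ) :
    Sc p q k n = RR p q (n - k) - RR p q (n - k - p) -
      RR p q n + RR p q (n + p * q - k - q - p) := by
  obtain ⟨hp2, hq2, hpq', hqN⟩ := pq_facts hp hq
  unfold Sc G
  rw [Nat.mod_eq_of_lt (by omega), if_pos (by omega), if_neg (by omega)]
  push_cast
  ring_nf

include hp hq hpq in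
lemma ScC {k : ℕ} (hk1 : p * q ≤ k + q) (hk2 : k + p ≤ p * q) (hk : k < p * q) (n : ℤ) :
    Sc p q k n = RR p q (n - k) - RR p q (n - k - p) -
      RR p q (n - k - q + p * q) + RR p q (n - k - q + p * q - p) := by
  obtain ⟨hp2, hq2, hpq', hqN⟩ := pq_facts hp hq
  have hmod : (k + q) % (p * q) = k + q - p * q := by
    rw [Nat.mod_eq_sub_mod hk1, Nat.mod_eq_of_lt (by omega)]
  unfold Sc G
  rw [hmod, if_pos hk2, if_pos (by omega)]
  have hc : ((k + q - p * q : ℕ) : ℤ) = (k:ℤ) + q - p * q := by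
    push_cast [Nat.cast_sub hk1]
    ring
  rw [hc]
  ring_nf

include hp hq hpq in
lemma ScD {k : ℕ} (hk2 : p * q < k + p) (hk : k < p * q) (n : ℤ) :
    Sc p q k n = RR p q n - RR p q (n - k - p + p * q) -
      RR p q (n - k - q + p * q) + RR p q (n - k - q + p * q - p) := by
  obtain ⟨hp2, hq2, hpq', hqN⟩ := pq_facts hp hq
  have hk1 : p * q ≤ k + q := by omega
  have hmod : (k + q) % (p * q) = k + q - p * q := by
    rw [Nat.mod_eq_sub_mod hk1, Nat.mod_eq_of_lt (by omega)]
  unfold Sc G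
  rw [hmod, if_neg (by omega), if_pos (by omega)]
  have hc : ((k + q - p * q : ℕ) : ℤ) = (k:ℤ) + q - p * q := by
    push_cast [Nat.cast_sub hk1]
    ring
  rw [hc]
  ring_nf

lemma rep_add_p {m : ℤ} (h : Rep p q (m - p)) : Rep p q m := by
  obtain ⟨s, t, hst⟩ := h; exact ⟨s + 1, t, by push_cast; linarith⟩

lemma RR_congr {x y : ℤ} (h : x = y) : RR p q x = RR p q y := by rw [h]

include hp hq hpq in
lemma RR_small {m : ℤ} (h0 : 0 < m) (h1 : m < p) : RR p q m = 0 :=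
  RR_eq_zero (notrep_small hp hq hpq h0 h1)

include hp hq hpq in
lemma Sc_rec {k : ℕ} (hk : k + 1 < p * q) {n : ℤ} (hn0 : 0 ≤ n)
    (hnd : n ≤ (p:ℤ) * q - p - q + 1) :
    Sc p q (k + 1) n = Sc p q k (n - 1) +
      ((if p * q ≤ k + p then ff p q n else 0) -
       (if p * q ≤ (k + q) % (p * q) + p then ff p q n else 0)) := by
  have hN : 0 < p * q := Nat.mul_pos hp.pos hq.pos
  unfold Sc
  have h1 : G p q (k + 1) n = G p q ((k + 1) % (p * q)) n := by
    rw [Nat.mod_eq_of_lt hk]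
  rw [h1, Grec hp hq hpq (by omega) hn0 hnd]
  have h2 : (k + 1 + q) % (p * q) = ((k + q) % (p * q) + 1) % (p * q) := by
    rw [Nat.mod_add_mod, Nat.add_right_comm]
  rw [h2, Grec hp hq hpq (Nat.mod_lt _ hN) hn0 hnd]
  ring

lemma Sc_neg {k : ℕ} {n : ℤ} (h : n < 0) : Sc p q k n = 0 := by
  unfold Sc
  rw [G_neg h, G_neg h]
  ring

include hp hq hpq in
lemma Sc_d_zero {k : ℕ} (hk : k < p * q) :
    Sc p q k ((p:ℤ) * q - p - q + 1) = 0 := by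
  obtain ⟨hp2, hq2, hpq', hqN⟩ := pq_facts hp hq
  have hp2' : (2:ℤ) ≤ p := by exact_mod_cast hp2
  have hq2' : (2:ℤ) ≤ q := by exact_mod_cast hq2
  have hpq2 : (p:ℤ) < q := by exact_mod_cast hpq
  have hkz : (k:ℤ) < (p:ℤ) * q := by exact_mod_cast hk
  by_cases hA : k + p + q ≤ p * q
  · rw [ScA hp hq hA]
    have hAz : (k:ℤ) + p + q ≤ (p:ℤ) * q := by exact_mod_cast hA
    rw [show ((p:ℤ) * q - p - q + 1 - k - p - q : ℤ) =
        ((p:ℤ) * q - p - q + 1 - k) - p - q by ring,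
      show ((p:ℤ) * q - p - q + 1 - k - p : ℤ) =
        ((p:ℤ) * q - p - q + 1 - k) - p by ring,
      show ((p:ℤ) * q - p - q + 1 - k - q : ℤ) =
        ((p:ℤ) * q - p - q + 1 - k) - q by ring,
      Lg hp hq hpq (show (p:ℤ) * q - p - q + 1 - k < (p:ℤ) * q by linarith),
      if_neg (by intro h; linarith)]
  · by_cases hB : k + q < p * q
    · rw [ScB hp hq hpq hB (by omega)]
      have hBz : (k:ℤ) + q < (p:ℤ) * q := by exact_mod_cast hB
      have hB2z : (p:ℤ) * q < (k:ℤ) + p + q := by exact_mod_cast (by omega : p * q < k + p + q)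
      have hDK : (p:ℤ) * q - p - q + 1 ≤ k := by linarith
      have h2 : RR p q ((p:ℤ) * q - p - q + 1 - k - p) = 0 := RR_neg (by linarith)
      have h3 : RR p q ((p:ℤ) * q - p - q + 1) = 1 :=
        RR_eq_one (rep_of_ge hp hq hpq (by linarith))
      by_cases hKD : (k:ℤ) = (p:ℤ) * q - p - q + 1
      · have h1 : RR p q ((p:ℤ) * q - p - q + 1 - k) = 1 := by
          rw [RR_congr (show (p:ℤ) * q - p - q + 1 - k = 0 by rw [hKD]; ring)]
          exact RR_eq_one rep_zero
        have h4 : RR p q ((p:ℤ) * q - p - q + 1 + p * q - k - q - p) = 0 := by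
          rw [RR_congr (show (p:ℤ) * q - p - q + 1 + p * q - k - q - p =
            (p:ℤ) * q - p - q by rw [hKD]; ring)]
          exact RR_eq_zero (frobenius hp hq hpq)
        rw [h1, h2, h3, h4]
        norm_num
      · have hm1 : (1:ℤ) ≤ (k:ℤ) - ((p:ℤ) * q - p - q + 1) := by
          rcases lt_or_gt_of_ne hKD with h | h
          · linarith
          · linarith
        have hm2 : (k:ℤ) - ((p:ℤ) * q - p - q + 1) ≤ (p:ℤ) - 2 := by linarith
        have h1 : RR p q ((p:ℤ) * q - p - q + 1 - k) = 0 := RR_neg (by linarith)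
        have hFm2 : (k:ℤ) - ((p:ℤ) * q - p - q + 1) ≤ (p:ℤ) * q - p - q := by nlinarith
        have hsym := sym hp hq hpq (show (0:ℤ) ≤ (k:ℤ) - ((p:ℤ) * q - p - q + 1) by linarith) hFm2
        have hsm : RR p q ((k:ℤ) - ((p:ℤ) * q - p - q + 1)) = 0 :=
          RR_small hp hq hpq (by linarith) (by linarith)
        have h4 : RR p q ((p:ℤ) * q - p - q + 1 + p * q - k - q - p) =
            RR p q ((p:ℤ) * q - p - q - ((k:ℤ) - ((p:ℤ) * q - p - q + 1))) :=
          RR_congr (by ring)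
        rw [h1, h2, h3, h4]
        linarith
    · by_cases hC : k + p ≤ p * q
      · rw [ScC hp hq hpq (by omega) hC hk]
        have hCz : (p:ℤ) * q ≤ (k:ℤ) + q := by exact_mod_cast (by omega : p * q ≤ k + q)
        have hC2z : (k:ℤ) + p ≤ (p:ℤ) * q := by exact_mod_cast hC
        have h1 : RR p q ((p:ℤ) * q - p - q + 1 - k) = 0 := RR_neg (by linarith)
        have h2 : RR p q ((p:ℤ) * q - p - q + 1 - k - p) = 0 := RR_neg (by linarith)
        -- c := k + q - p*q ∈ [0, q - p]
        by_cases hc0 : (k:ℤ) + q - p * q = 0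
        · have h3 : RR p q ((p:ℤ) * q - p - q + 1 - k - q + p * q) = 1 := by
            rw [RR_congr (show (p:ℤ) * q - p - q + 1 - k - q + p * q =
              (p:ℤ) * q - p - q + 1 by linarith)]
            exact RR_eq_one (rep_of_ge hp hq hpq (by linarith))
          have hsym := sym hp hq hpq (show (0:ℤ) ≤ (p:ℤ) - 1 by linarith)
            (show (p:ℤ) - 1 ≤ (p:ℤ) * q - p - q by nlinarith)
          have hsm : RR p q ((p:ℤ) - 1) = 0 := RR_small hp hq hpq (by linarith) (by linarith)
          have h4 : RR p q ((p:ℤ) * q - p - q + 1 - k - q + p * q - p) =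
              RR p q ((p:ℤ) * q - p - q - ((p:ℤ) - 1)) := RR_congr (by linarith)
          rw [h1, h2, h3, h4]
          linarith
        · have hc1 : (1:ℤ) ≤ (k:ℤ) + q - p * q := by
            rcases lt_or_gt_of_ne hc0 with h | h
            · linarith
            · linarith
          have hcq : (k:ℤ) + q - p * q ≤ (q:ℤ) - p := by linarith
          by_cases hd : 0 ≤ (p:ℤ) * q - p - q + 1 - ((k:ℤ) + q - p * q) - p
          · -- generic subcase
            have hsym1 := sym hp hq hpq (show (0:ℤ) ≤ (k:ℤ) + q - p * q - 1 by linarith)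
              (show (k:ℤ) + q - p * q - 1 ≤ (p:ℤ) * q - p - q by nlinarith)
            have hsym2 := sym hp hq hpq (show (0:ℤ) ≤ (k:ℤ) + q - p * q - 1 + p by linarith)
              (show (k:ℤ) + q - p * q - 1 + p ≤ (p:ℤ) * q - p - q by linarith)
            have h3 : RR p q ((p:ℤ) * q - p - q + 1 - k - q + p * q) =
                RR p q ((p:ℤ) * q - p - q - ((k:ℤ) + q - p * q - 1)) := RR_congr (by ring)
            have h4 : RR p q ((p:ℤ) * q - p - q + 1 - k - q + p * q - p) =
                RR p q ((p:ℤ) * q - p - q - ((k:ℤ) + q - p * q - 1 + p)) := RR_congr (by ring)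
            have hshift : RR p q ((k:ℤ) + q - p * q - 1) =
                RR p q ((k:ℤ) + q - p * q - 1 + p) := by
              by_cases hrep : Rep p q ((k:ℤ) + q - p * q - 1)
              · rw [RR_eq_one hrep, RR_eq_one (rep_add_p (by
                  rw [show (k:ℤ) + q - p * q - 1 + p - p = (k:ℤ) + q - p * q - 1 by ring]
                  exact hrep))]
              · rw [RR_eq_zero hrep, RR_eq_zero]
                intro hrep2
                rw [rep_iff_lt_q hq (show (k:ℤ) + q - p * q - 1 + p < q by linarith)] at hrep2
                obtain ⟨sv, hsv⟩ := hrep2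
                have hsv1 : 1 ≤ sv := by
                  rcases Nat.eq_zero_or_pos sv with rfl | h
                  · exfalso; push_cast at hsv; linarith
                  · exact h
                exact hrep ⟨sv - 1, 0, by push_cast [Nat.cast_sub hsv1]; linarith⟩
            rw [h1, h2, h3, h4]
            linarith
          · -- boundary subcase : D - c - p < 0
            push_neg at hd
            have h4 : RR p q ((p:ℤ) * q - p - q + 1 - k - q + p * q - p) = 0 :=
              RR_neg (by linarith)
            have h3 : RR p q ((p:ℤ) * q - p - q + 1 - k - q + p * q) = 0 := by
              apply RR_small hp hq hpq
              · nlinarith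
              · linarith
            rw [h1, h2, h3, h4]
            ring
      · -- case D : p*q < k + p
        rw [ScD hp hq hpq (by omega) hk]
        have hDz : (p:ℤ) * q < (k:ℤ) + p := by exact_mod_cast (by omega : p * q < k + p)
        -- u := k + p - p*q ∈ [1, p-1]
        have hu1 : (1:ℤ) ≤ (k:ℤ) + p - p * q := by linarith
        have hu2 : (k:ℤ) + p - p * q ≤ (p:ℤ) - 1 := by linarith
        have h0 : RR p q ((p:ℤ) * q - p - q + 1) = 1 :=
          RR_eq_one (rep_of_ge hp hq hpq (by linarith))
        by_cases hd : 0 ≤ (p:ℤ) * q - p - q + 1 - ((k:ℤ) + p - p * q) - q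
        · -- generic subcase
          have hsym1 := sym hp hq hpq (show (0:ℤ) ≤ (k:ℤ) + p - p * q - 1 by linarith)
            (show (k:ℤ) + p - p * q - 1 ≤ (p:ℤ) * q - p - q by nlinarith)
          have hsym2 := sym hp hq hpq
            (show (0:ℤ) ≤ (k:ℤ) + q - p * q - 1 by linarith)
            (show (k:ℤ) + q - p * q - 1 ≤ (p:ℤ) * q - p - q by nlinarith)
          have hsym3 := sym hp hq hpq
            (show (0:ℤ) ≤ (k:ℤ) + p - p * q - 1 + q by linarith)
            (show (k:ℤ) + p - p * q - 1 + q ≤ (p:ℤ) * q - p - q by linarith)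
          have h1 : RR p q ((p:ℤ) * q - p - q + 1 - k - p + p * q) =
              RR p q ((p:ℤ) * q - p - q - ((k:ℤ) + p - p * q - 1)) := RR_congr (by ring)
          have h2 : RR p q ((p:ℤ) * q - p - q + 1 - k - q + p * q) =
              RR p q ((p:ℤ) * q - p - q - ((k:ℤ) + q - p * q - 1)) := RR_congr (by ring)
          have h3 : RR p q ((p:ℤ) * q - p - q + 1 - k - q + p * q - p) =
              RR p q ((p:ℤ) * q - p - q - ((k:ℤ) + p - p * q - 1 + q)) := RR_congr (by ring)
          by_cases hU : (k:ℤ) + p - p * q = 1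
          · have e1 : RR p q ((k:ℤ) + p - p * q - 1) = 1 := by
              rw [RR_congr (show (k:ℤ) + p - p * q - 1 = 0 by linarith)]
              exact RR_eq_one rep_zero
            have e2 : RR p q ((k:ℤ) + q - p * q - 1) = 0 := by
              rw [RR_eq_zero]
              intro hrep
              rw [rep_iff_lt_q hq (show (k:ℤ) + q - p * q - 1 < q by linarith)] at hrep
              obtain ⟨sv, hsv⟩ := hrep
              exact p_not_dvd_q hp hq hpq ⟨(sv:ℤ) + 1, by linarith⟩
            have e3 : RR p q ((k:ℤ) + p - p * q - 1 + q) = 1 := by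
              rw [RR_congr (show (k:ℤ) + p - p * q - 1 + q = (q:ℤ) by linarith)]
              exact RR_eq_one ⟨0, 1, by push_cast; ring⟩
            rw [h0, h1, h2, h3]
            linarith
          · have hu2' : (2:ℤ) ≤ (k:ℤ) + p - p * q := by
              rcases lt_or_gt_of_ne hU with h | h
              · linarith
              · linarith
            have e1 : RR p q ((k:ℤ) + p - p * q - 1) = 0 :=
              RR_small hp hq hpq (by linarith) (by linarith)
            have hshift : RR p q ((k:ℤ) + q - p * q - 1) =
                RR p q ((k:ℤ) + p - p * q - 1 + q) := by
              by_cases hrep : Rep p q ((k:ℤ) + q - p * q - 1)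
              · rw [RR_eq_one hrep, RR_eq_one]
                apply rep_add_p
                rw [show (k:ℤ) + p - p * q - 1 + q - p = (k:ℤ) + q - p * q - 1 by ring]
                exact hrep
              · rw [RR_eq_zero hrep, RR_eq_zero]
                intro hrep2
                rw [rep_split_q] at hrep2
                rcases hrep2 with ⟨sv, hsv⟩ | hrep2
                · have hsv1 : 1 ≤ sv := by
                    rcases Nat.eq_zero_or_pos sv with rfl | h
                    · exfalso; push_cast at hsv; nlinarith
                    · exact h
                  exact hrep ⟨sv - 1, 0, by push_cast [Nat.cast_sub hsv1]; linarith⟩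
                · refine notrep_small hp hq hpq (show (0:ℤ) < (k:ℤ) + p - p * q - 1 + q - q
                    by linarith) (by linarith) hrep2
            rw [h0, h1, h2, h3]
            linarith
        · -- boundary subcase : D - u - q < 0, forces p = 2, u = 1
          push_neg at hd
          have hP2 : (p:ℤ) = 2 := by
            by_contra hne
            have hp3 : (3:ℤ) ≤ p := by
              rcases lt_or_gt_of_ne hne with h | h
              · linarith
              · linarith
            have hq4 : (4:ℤ) ≤ q := by linarith
            nlinarith
          have hU : (k:ℤ) + p - p * q = 1 := by linarith
          have hPQ2 : (p:ℤ) * q = 2 * q := by rw [hP2]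
          have e1 : RR p q ((p:ℤ) * q - p - q + 1 - k - p + p * q) = 0 := by
            rw [RR_congr (show (p:ℤ) * q - p - q + 1 - k - p + p * q =
              (p:ℤ) * q - p - q by linarith)]
            exact RR_eq_zero (frobenius hp hq hpq)
          have e2 : RR p q ((p:ℤ) * q - p - q + 1 - k - q + p * q) = 1 := by
            rw [RR_congr (show (p:ℤ) * q - p - q + 1 - k - q + p * q = 0 by linarith)]
            exact RR_eq_one rep_zero
          have e3 : RR p q ((p:ℤ) * q - p - q + 1 - k - q + p * q - p) = 0 :=
            RR_neg (by linarith)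
          rw [h0, e1, e2, e3]
          ring

include hp hq hpq in
lemma Sc_bound {k : ℕ} (hk : k < p * q) {n : ℤ} (hn0 : 0 ≤ n)
    (hn : n ≤ (p:ℤ) * q - p - q) : |Sc p q k n| ≤ 1 := by
  obtain ⟨hp2, hq2, hpq', hqN⟩ := pq_facts hp hq
  have hp2' : (2:ℤ) ≤ p := by exact_mod_cast hp2
  have hq2' : (2:ℤ) ≤ q := by exact_mod_cast hq2
  have hpq2 : (p:ℤ) < q := by exact_mod_cast hpq
  have hkz : (k:ℤ) < (p:ℤ) * q := by exact_mod_cast hk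
  rw [abs_le]
  by_cases hA : k + p + q ≤ p * q
  · rw [ScA hp hq hA, Lg hp hq hpq (show n - (k:ℤ) < (p:ℤ) * q by linarith)]
    split_ifs <;> norm_num
  · by_cases hB : k + q < p * q
    · rw [ScB hp hq hpq hB (by omega)]
      have hDK : (p:ℤ) * q - p - q + 1 ≤ k := by
        have : (p:ℤ) * q < (k:ℤ) + p + q := by exact_mod_cast (by omega : p * q < k + p + q)
        linarith
      rw [RR_neg (show n - (k:ℤ) < 0 by linarith),
        RR_neg (show n - (k:ℤ) - p < 0 by linarith)]
      have b1 := RR_nonneg (p:=p) (q:=q) n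
      have b2 := RR_le_one (p:=p) (q:=q) n
      have b3 := RR_nonneg (p:=p) (q:=q) (n + (p:ℤ) * q - k - q - p)
      have b4 := RR_le_one (p:=p) (q:=q) (n + (p:ℤ) * q - k - q - p)
      constructor <;> linarith
    · by_cases hC : k + p ≤ p * q
      · rw [ScC hp hq hpq (by omega) hC hk]
        have hCz : (p:ℤ) * q ≤ (k:ℤ) + q := by exact_mod_cast (by omega : p * q ≤ k + q)
        rw [RR_neg (show n - (k:ℤ) < 0 by linarith),
          RR_neg (show n - (k:ℤ) - p < 0 by linarith)]
        have b1 := RR_nonneg (p:=p) (q:=q) (n - (k:ℤ) - q + p * q)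
        have b2 := RR_le_one (p:=p) (q:=q) (n - (k:ℤ) - q + p * q)
        have b3 := RR_nonneg (p:=p) (q:=q) (n - (k:ℤ) - q + p * q - p)
        have b4 := RR_le_one (p:=p) (q:=q) (n - (k:ℤ) - q + p * q - p)
        constructor <;> linarith
      · rw [ScD hp hq hpq (by omega) hk]
        have hDz : (p:ℤ) * q < (k:ℤ) + p := by exact_mod_cast (by omega : p * q < k + p)
        have hu1 : (1:ℤ) ≤ (k:ℤ) + p - p * q := by linarith
        have b1 := RR_nonneg (p:=p) (q:=q) n
        have b2 := RR_le_one (p:=p) (q:=q) n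
        have b3 := RR_nonneg (p:=p) (q:=q) (n - (k:ℤ) - p + p * q)
        have b4 := RR_le_one (p:=p) (q:=q) (n - (k:ℤ) - p + p * q)
        have b5 := RR_nonneg (p:=p) (q:=q) (n - (k:ℤ) - q + p * q)
        have b6 := RR_le_one (p:=p) (q:=q) (n - (k:ℤ) - q + p * q)
        have b7 := RR_nonneg (p:=p) (q:=q) (n - (k:ℤ) - q + p * q - p)
        have b8 := RR_le_one (p:=p) (q:=q) (n - (k:ℤ) - q + p * q - p)
        have hup : RR p q (n - (k:ℤ) - q + p * q - p) ≤ RR p q (n - (k:ℤ) - p + p * q) := by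
          have := RR_sub_q_le (p := p) (q := q) (n - (k:ℤ) - p + p * q)
          rwa [RR_congr (show n - (k:ℤ) - p + p * q - q = n - (k:ℤ) - q + p * q - p
            by ring)] at this
        have hcl : RR p q (n - (k:ℤ) - p + p * q) + RR p q (n - (k:ℤ) - q + p * q) -
            RR p q (n - (k:ℤ) - q + p * q - p) ≤ 1 := by
          by_cases hr2 : Rep p q (n - (k:ℤ) - p + p * q)
          · obtain ⟨s, t, hst⟩ := hr2
            rcases Nat.eq_zero_or_pos t with rfl | ht
            · -- n - u = s * p
              by_cases hr3 : Rep p q (n - (k:ℤ) - q + p * q)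
              · exfalso
                obtain ⟨a, b, hab⟩ := hr3
                have hst' : n - (k:ℤ) - p + p * q = s * p := by rw [hst]; push_cast; ring
                have heq : ((s:ℤ) + 1 - a) * p = ((b:ℤ) + 1) * q := by
                  have : n - (k:ℤ) - q + p * q = (n - (k:ℤ) - p + p * q) + p - q := by ring
                  rw [this, hst'] at hab
                  linarith
                have hq' : Prime (q : ℤ) := Nat.prime_iff_prime_int.mp hq
                have hdsa : (q:ℤ) ∣ ((s:ℤ) + 1 - a) :=
                  ((hq'.dvd_mul).mp ⟨(b:ℤ) + 1, by linarith⟩).resolve_right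
                    (q_not_dvd_p hp hq hpq)
                have ha0 : (0:ℤ) ≤ a := by positivity
                have hb0 : (0:ℤ) ≤ b := by positivity
                have hsa : (0:ℤ) < (s:ℤ) + 1 - a := by nlinarith
                have hslt : (s:ℤ) * p < (p:ℤ) * q := by
                  have : (s:ℤ) * p = n - (k:ℤ) - p + p * q := hst'.symm
                  linarith
                have hsq : (s:ℤ) < q := by nlinarith
                have hge : (q:ℤ) ≤ (s:ℤ) + 1 - a := Int.le_of_dvd hsa hdsa
                have hseq : (s:ℤ) = (q:ℤ) - 1 := by linarith
                have haeq : (a:ℤ) = 0 := by linarith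
                -- then n - u = (q-1) p, so n ≥ (q-1)p + 1 > p*q - p - q
                have : n - ((k:ℤ) + p - p * q) = ((q:ℤ) - 1) * p := by
                  rw [show n - ((k:ℤ) + p - p * q) = n - (k:ℤ) - p + p * q by ring, hst',
                    hseq]
                nlinarith
              · rw [RR_eq_zero hr3]
                linarith
            · have h4 : RR p q (n - (k:ℤ) - q + p * q - p) = 1 := by
                apply RR_eq_one
                refine ⟨s, t - 1, ?_⟩
                rw [show n - (k:ℤ) - q + p * q - p = (n - (k:ℤ) - p + p * q) - q by ring, hst]
                push_cast [Nat.cast_sub ht]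
                ring
              rw [h4]
              linarith
          · rw [RR_eq_zero hr2]
            linarith
        constructor <;> linarith

lemma coeff_sumC (g : ℕ → ℤ) (M i : ℕ) :
    (∑ n ∈ range M, C (g n) * X ^ n).coeff i = if i < M then g i else 0 := by
  rw [finset_sum_coeff]
  simp only [coeff_C_mul, coeff_X_pow, mul_ite, mul_one, mul_zero]
  rw [Finset.sum_ite_eq (range M) i g]
  simp [Finset.mem_range]

include hp hq hpq in
lemma hdD : (((p - 1) * (q - 1) : ℕ) : ℤ) = (p:ℤ) * q - p - q + 1 := by
  push_cast [Nat.cast_sub hp.one_le, Nat.cast_sub hq.one_le]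
  ring

include hp hq hpq in
lemma conv_coeff (m : ℕ) :
    ((∑ n ∈ range ((p - 1) * (q - 1) + 1), C (ff p q n) * X ^ n) *
      (∑ j ∈ range q, X ^ j)).coeff m = RR p q m - RR p q ((m:ℤ) - q) := by
  rw [Finset.mul_sum, finset_sum_coeff]
  have hterm : ∀ j ∈ range q,
      ((∑ n ∈ range ((p - 1) * (q - 1) + 1), C (ff p q n) * X ^ n) * X ^ j).coeff m =
        ff p q ((m:ℤ) - j) := by
    intro j _
    rw [coeff_mul_X_pow', ]
    by_cases hjm : j ≤ m
    · rw [if_pos hjm, coeff_sumC]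
      by_cases hlt : m - j < (p - 1) * (q - 1) + 1
      · rw [if_pos hlt]
        congr 1
        push_cast [Nat.cast_sub hjm]
        ring
      · rw [if_neg hlt]
        rw [eq_comm]
        apply ff_gt hp hq hpq
        have h1 : (p - 1) * (q - 1) + 1 ≤ m - j := by omega
        have h2 : (((m - j : ℕ)):ℤ) = (m:ℤ) - j := by push_cast [Nat.cast_sub hjm]; ring
        have h3 : ((((p - 1) * (q - 1) + 1 : ℕ)):ℤ) ≤ ((m - j : ℕ) : ℤ) := by
          exact_mod_cast h1
        rw [h2] at h3
        push_cast [hdD hp hq hpq] at h3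
        linarith
    · rw [if_neg hjm, eq_comm]
      apply ff_neg
      have : (m:ℤ) < j := by exact_mod_cast Nat.lt_of_not_le hjm
      linarith
  rw [Finset.sum_congr rfl hterm]
  have htele : ∀ j : ℕ, ff p q ((m:ℤ) - j) =
      (fun i : ℕ => RR p q ((m:ℤ) - i)) j - (fun i : ℕ => RR p q ((m:ℤ) - i)) (j + 1) := by
    intro j
    simp only []
    unfold ff
    congr 2
    push_cast
    ring
  rw [Finset.sum_congr rfl (fun j _ => htele j), Finset.sum_range_sub']
  simp

include hp hq hpq in
lemma cyclo_eq :
    cyclotomic (p * q) ℤ = ∑ n ∈ range ((p - 1) * (q - 1) + 1), C (ff p q n) * X ^ n := by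
  haveI : Fact q.Prime := ⟨hq⟩
  have hnd : ¬ p ∣ q := by
    intro h
    rcases (hq.eq_one_or_self_of_dvd p h) with h1 | h1
    · exact hp.one_lt.ne' h1
    · omega
  have h1 : expand ℤ p (cyclotomic q ℤ) = cyclotomic (p * q) ℤ * cyclotomic q ℤ := by
    rw [← mul_comm q p, cyclotomic_expand_eq_cyclotomic_mul hp hnd]
  have h2 : expand ℤ p (cyclotomic q ℤ) = ∑ j ∈ range q, X ^ (p * j) := by
    rw [cyclotomic_prime ℤ q, map_sum]
    refine Finset.sum_congr rfl fun j _ => ?_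
    rw [map_pow, expand_X, ← pow_mul]
  have hC : (∑ n ∈ range ((p - 1) * (q - 1) + 1), C (ff p q n) * X ^ n) *
      cyclotomic q ℤ = ∑ j ∈ range q, X ^ (p * j) := by
    rw [cyclotomic_prime ℤ q]
    ext m
    rw [conv_coeff hp hq hpq, finset_sum_coeff]
    simp only [coeff_X_pow]
    have hp0 : (0:ℤ) < p := by exact_mod_cast hp.pos
    have hq0 : (0:ℤ) < q := by exact_mod_cast hq.pos
    by_cases hm : m < p * q
    · rw [Lchi hp hq hpq (by exact_mod_cast hm)]
      by_cases hex : ∃ s : ℕ, (m:ℤ) = (s:ℤ) * p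
      · obtain ⟨sv, hsv⟩ := hex
        have hsvq : sv ∈ range q := by
          rw [Finset.mem_range]
          by_contra hc
          have : (q:ℤ) ≤ sv := by exact_mod_cast Nat.le_of_not_lt hc
          have : (m:ℤ) < (p:ℤ) * q := by exact_mod_cast hm
          nlinarith
        rw [if_pos ⟨sv, hsv⟩, eq_comm]
        rw [Finset.sum_eq_single_of_mem sv hsvq]
        · rw [if_pos]
          have : (m:ℤ) = (p:ℤ) * sv := by rw [hsv]; ring
          exact_mod_cast this
        · intro j _ hj
          rw [if_neg]
          intro hmj
          apply hj
          have : (j:ℤ) * p = (sv:ℤ) * p := by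
            have : (m:ℤ) = (p:ℤ) * j := by exact_mod_cast hmj
            linarith [hsv]
          have : (j:ℤ) = sv := by
            have := mul_right_cancel₀ (show (p:ℤ) ≠ 0 by linarith) this
            exact this
          exact_mod_cast this
      · rw [if_neg hex, eq_comm]
        apply Finset.sum_eq_zero
        intro j _
        rw [if_neg]
        intro hmj
        exact hex ⟨j, by rw [hmj]; push_cast; ring⟩
    · have hge : p * q ≤ m := Nat.le_of_not_lt hm
      have hgez : (p:ℤ) * q ≤ m := by exact_mod_cast hge
      rw [RR_eq_one (rep_of_ge hp hq hpq (by linarith)),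
        RR_eq_one (rep_of_ge hp hq hpq (by linarith)), eq_comm]
      rw [show (1:ℤ) - 1 = 0 by ring]
      apply Finset.sum_eq_zero
      intro j hj
      rw [Finset.mem_range] at hj
      rw [if_neg]
      intro hmj
      have : p * j < p * q := by
        exact mul_lt_mul_of_pos_left hj hp.pos
      omega
  have hne : cyclotomic q ℤ ≠ 0 := (cyclotomic.monic q ℤ).ne_zero
  apply mul_right_cancel₀ hne
  rw [hC, h1.symm.trans h2]

include hp hq hpq in
lemma cyclo_coeff (n : ℕ) : (cyclotomic (p * q) ℤ).coeff n = ff p q n := by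
  rw [cyclo_eq hp hq hpq, coeff_sumC]
  by_cases h : n < (p - 1) * (q - 1) + 1
  · rw [if_pos h]
  · rw [if_neg h, eq_comm]
    apply ff_gt hp hq hpq
    have h1 : (p - 1) * (q - 1) + 1 ≤ n := Nat.le_of_not_lt h
    have h3 : ((((p - 1) * (q - 1) + 1 : ℕ)):ℤ) ≤ (n : ℤ) := by exact_mod_cast h1
    push_cast [hdD hp hq hpq] at h3
    linarith

lemma rt_coeff (k n : ℕ) :
    (rt p q k).coeff n = if n < (p - 1) * (q - 1) then Sc p q k n else 0 :=
  coeff_sumC _ _ _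

include hp hq hpq in
lemma rt_step {k : ℕ} (hk : k + 1 < p * q) :
    rt p q (k + 1) = X * rt p q k -
      C (Sc p q k ((p:ℤ) * q - p - q)) * cyclotomic (p * q) ℤ := by
  obtain ⟨hp2, hq2, hpq', hqN⟩ := pq_facts hp hq
  have hp2' : (2:ℤ) ≤ p := by exact_mod_cast hp2
  have hq2' : (2:ℤ) ≤ q := by exact_mod_cast hq2
  have hdpos : 0 < (p - 1) * (q - 1) := Nat.mul_pos (by omega) (by omega)
  have hDpos : (0:ℤ) ≤ (p:ℤ) * q - p - q + 1 := by nlinarith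
  have hE := Sc_rec hp hq hpq hk (n := (p:ℤ) * q - p - q + 1) hDpos le_rfl
  rw [Sc_d_zero hp hq hpq hk, ff_D hp hq hpq,
    show ((p:ℤ) * q - p - q + 1) - 1 = (p:ℤ) * q - p - q by ring] at hE
  have key : ∀ n : ℤ, 0 ≤ n → n ≤ (p:ℤ) * q - p - q + 1 →
      Sc p q (k + 1) n = Sc p q k (n - 1) -
        Sc p q k ((p:ℤ) * q - p - q) * ff p q n := by
    intro n h1 h2
    have hr := Sc_rec hp hq hpq hk h1 h2
    have hs1 : (if p * q ≤ k + p then ff p q n else 0) =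
        (if p * q ≤ k + p then (1:ℤ) else 0) * ff p q n := by split <;> ring
    have hs2 : (if p * q ≤ (k + q) % (p * q) + p then ff p q n else 0) =
        (if p * q ≤ (k + q) % (p * q) + p then (1:ℤ) else 0) * ff p q n := by
      split <;> ring
    rw [hs1, hs2] at hr
    linear_combination hr - (ff p q n) * hE
  ext n
  rw [rt_coeff, coeff_sub, coeff_C_mul, cyclo_coeff hp hq hpq,
    show (X : ℤ[X]) * rt p q k = rt p q k * X ^ 1 by ring, coeff_mul_X_pow', rt_coeff]
  rcases Nat.eq_zero_or_pos n with rfl | hn1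
  · rw [if_pos hdpos, if_neg (by omega)]
    have h := key 0 le_rfl (by linarith)
    have hneg : Sc p q k ((0:ℤ) - 1) = 0 := Sc_neg (by norm_num)
    rw [hneg, ff_zero] at h
    push_cast
    rw [ff_zero]
    linarith [h]
  · have hcast : ((n - 1 : ℕ) : ℤ) = (n:ℤ) - 1 := by push_cast [Nat.cast_sub hn1]; ring
    rcases lt_trichotomy n ((p - 1) * (q - 1)) with hnd | hnd | hnd
    · rw [if_pos hnd, if_pos (by omega), if_pos (by omega)]
      have hn2 : (n:ℤ) ≤ (p:ℤ) * q - p - q + 1 := by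
        have : (n:ℤ) < (((p-1)*(q-1) : ℕ) : ℤ) := by exact_mod_cast hnd
        rw [hdD hp hq hpq] at this
        linarith
      have h := key n (by positivity) hn2
      rw [h, hcast]
    · rw [if_neg (by omega), if_pos (by omega), if_pos (by omega)]
      have hn : (n:ℤ) = (p:ℤ) * q - p - q + 1 := by
        rw [hnd]
        exact hdD hp hq hpq
      have h1 : ((n - 1 : ℕ) : ℤ) = (p:ℤ) * q - p - q := by
        rw [hcast, hn]
        ring
      have h2 : ff p q (n:ℤ) = 1 := by
        rw [hn]
        exact ff_D hp hq hpq
      rw [h1, h2]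
      ring
    · rw [if_neg (by omega), if_pos (by omega), if_neg (by omega)]
      have h2 : ff p q (n:ℤ) = 0 := by
        apply ff_gt hp hq hpq
        have : (((p-1)*(q-1) : ℕ) : ℤ) < (n:ℤ) := by exact_mod_cast hnd
        rw [hdD hp hq hpq] at this
        linarith
      rw [h2]
      ring

include hp hq hpq in
lemma rt_zero : rt p q 0 = 1 := by
  obtain ⟨hp2, hq2, hpq', hqN⟩ := pq_facts hp hq
  have hp2' : (2:ℤ) ≤ p := by exact_mod_cast hp2
  have hq2' : (2:ℤ) ≤ q := by exact_mod_cast hq2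
  have hdpos : 0 < (p - 1) * (q - 1) := Nat.mul_pos (by omega) (by omega)
  ext n
  rw [rt_coeff, Polynomial.coeff_one]
  by_cases hn : n < (p - 1) * (q - 1)
  · rw [if_pos hn]
    have hmlt : (n:ℤ) - ((0:ℕ):ℤ) < (p:ℤ) * q := by
      have h1 : (n:ℤ) < (((p - 1) * (q - 1) : ℕ) : ℤ) := by exact_mod_cast hn
      rw [hdD hp hq hpq] at h1
      push_cast
      linarith
    rw [ScA hp hq (k := 0) (by omega) (n:ℤ), Lg hp hq hpq hmlt]
    by_cases hn0 : n = 0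
    · subst hn0
      rw [if_pos (by norm_num), if_pos rfl]
    · rw [if_neg, if_neg hn0]
      intro hc
      apply hn0
      have h2 : (n:ℤ) = ((0:ℕ):ℤ) := by push_cast at hc ⊢; linarith
      exact_mod_cast h2
  · rw [if_neg hn, if_neg (by omega)]

include hp hq hpq in
lemma dvd_rt : ∀ k, k < p * q → cyclotomic (p * q) ℤ ∣ (X:ℤ[X]) ^ k - rt p q k := by
  intro k
  induction k with
  | zero =>
    intro _
    rw [rt_zero hp hq hpq, pow_zero, sub_self]
    exact dvd_zero _
  | succ k ih =>
    intro hk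
    have ihk := ih (by omega)
    rw [rt_step hp hq hpq hk,
      show (X:ℤ[X]) ^ (k + 1) - (X * rt p q k -
          C (Sc p q k ((p:ℤ) * q - p - q)) * cyclotomic (p * q) ℤ) =
        X * ((X:ℤ[X]) ^ k - rt p q k) +
          C (Sc p q k ((p:ℤ) * q - p - q)) * cyclotomic (p * q) ℤ by ring]
    exact dvd_add (ihk.mul_left X) (dvd_mul_left _ _)

end basic
end MBP

open MBP

theorem modByMonic_pow_coeff_le_one (p q : ℕ) (hp : p.Prime) (hq : q.Prime)
    (hpq : p < q) (k : ℕ) :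
    ∀ n, |(X ^ k %ₘ cyclotomic (p * q) ℤ).coeff n| ≤ 1 := by
  intro n
  have hN : 0 < p * q := Nat.mul_pos hp.pos hq.pos
  have hmono := cyclotomic.monic (p * q) ℤ
  have hnd : (cyclotomic (p * q) ℤ).natDegree = (p - 1) * (q - 1) := by
    rw [natDegree_cyclotomic,
      Nat.totient_mul ((Nat.coprime_primes hp hq).mpr (by omega)),
      Nat.totient_prime hp, Nat.totient_prime hq]
  have hdvd1 : cyclotomic (p * q) ℤ ∣ (X:ℤ[X]) ^ (p * q) - 1 :=
    cyclotomic.dvd_X_pow_sub_one _ _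
  have h1 : cyclotomic (p * q) ℤ ∣ (X:ℤ[X]) ^ k - X ^ (k % (p * q)) := by
    have hsplit : (X:ℤ[X]) ^ k = ((X:ℤ[X]) ^ (p * q)) ^ (k / (p * q)) * X ^ (k % (p * q)) := by
      rw [← pow_mul, ← pow_add]
      congr 1
      exact (Nat.div_add_mod k (p * q)).symm
    have h2 : cyclotomic (p * q) ℤ ∣ ((X:ℤ[X]) ^ (p * q)) ^ (k / (p * q)) - 1 := by
      have := hdvd1.trans (sub_dvd_pow_sub_pow ((X:ℤ[X]) ^ (p * q)) 1 (k / (p * q)))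
      simpa using this
    rw [hsplit, show ((X:ℤ[X]) ^ (p * q)) ^ (k / (p * q)) * X ^ (k % (p * q)) -
        X ^ (k % (p * q)) =
      (((X:ℤ[X]) ^ (p * q)) ^ (k / (p * q)) - 1) * X ^ (k % (p * q)) by ring]
    exact h2.mul_right _
  have h3 : cyclotomic (p * q) ℤ ∣ (X:ℤ[X]) ^ k - X ^ k %ₘ cyclotomic (p * q) ℤ := by
    have hmd := modByMonic_add_div ((X:ℤ[X]) ^ k) (cyclotomic (p * q) ℤ)
    exact ⟨(X:ℤ[X]) ^ k /ₘ cyclotomic (p * q) ℤ, by linear_combination -hmd⟩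
  have h4 : cyclotomic (p * q) ℤ ∣
      (X ^ k %ₘ cyclotomic (p * q) ℤ) - rt p q (k % (p * q)) := by
    have h5 := dvd_rt hp hq hpq (k % (p * q)) (Nat.mod_lt _ hN)
    rw [show (X ^ k %ₘ cyclotomic (p * q) ℤ) - rt p q (k % (p * q)) =
      -((X:ℤ[X]) ^ k - X ^ k %ₘ cyclotomic (p * q) ℤ) +
        ((X:ℤ[X]) ^ k - X ^ (k % (p * q))) +
        ((X:ℤ[X]) ^ (k % (p * q)) - rt p q (k % (p * q))) by ring]
    exact dvd_add (dvd_add ((dvd_neg).mpr h3) h1) h5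
  have hlt : ((X ^ k %ₘ cyclotomic (p * q) ℤ) - rt p q (k % (p * q))).degree <
      (cyclotomic (p * q) ℤ).degree := by
    have hd1 : (X ^ k %ₘ cyclotomic (p * q) ℤ).degree < (cyclotomic (p * q) ℤ).degree :=
      degree_modByMonic_lt _ hmono
    have hd2 : (rt p q (k % (p * q))).degree < (cyclotomic (p * q) ℤ).degree := by
      rw [degree_eq_natDegree hmono.ne_zero, hnd]
      rw [degree_lt_iff_coeff_zero]
      intro m hm
      rw [rt_coeff]
      exact if_neg (by exact_mod_cast not_lt.mpr (by exact_mod_cast hm))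
    exact lt_of_le_of_lt (degree_sub_le _ _) (max_lt hd1 hd2)
  have heq : X ^ k %ₘ cyclotomic (p * q) ℤ = rt p q (k % (p * q)) :=
    sub_eq_zero.mp (Polynomial.eq_zero_of_dvd_of_degree_lt h4 hlt)
  rw [heq, rt_coeff]
  by_cases hn2 : n < (p - 1) * (q - 1)
  · rw [if_pos hn2]
    apply Sc_bound hp hq hpq (Nat.mod_lt _ hN) (by positivity)
    have hcast : (n:ℤ) < (((p - 1) * (q - 1) : ℕ) : ℤ) := by exact_mod_cast hn2
    rw [hdD hp hq hpq] at hcast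
    linarith
  · rw [if_neg hn2]
    norm_num
end
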